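/- arXiv:1708.01545 — 11 statements merged into one kernel-verified Lean document; each statement's English description precedes it below -/
import Mathlib

section
/- Let X be a complex linear space, H a complex Hilbert space, and R : X → H a linear map. An antilinear functional x' ∈ X' lies in the range of R* (the restriction of the dual operator R' to H ⊆ H') if and only if (i) ⟨x', x⟩ = 0 for all x ∈ ker R, and (ii) the supremum over x ∈ X of |⟨x', x⟩|²/‖Rx‖² is finite (with the convention 0/0 = 0). -/
open scoped ComplexOrder ComplexConjugate
open Complex

noncomputable section

/-- For a linear map `R : V → H` into a Hilbert space, `adjMap R : H → V'` is the
operator `R*`, sending `h` to the antilinear functional `v ↦ (h | R v)`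
(in Mathlib's convention, `v ↦ ⟪R v, h⟫`). -/
def adjMap {V H : Type*} [AddCommGroup V] [Module ℂ V]
    [NormedAddCommGroup H] [InnerProductSpace ℂ H] (R : V →ₗ[ℂ] H) :
    H →ₗ[ℂ] (V →ₗ⋆[ℂ] ℂ) where
  toFun h :=
    { toFun := fun v => @inner ℂ _ _ (R v) h
      map_add' := fun v w => by simp [inner_add_left]
      map_smul' := fun c v => by simp [inner_smul_left]; ring }
  map_add' h₁ h₂ := by ext v; simp [inner_add_right]
  map_smul' c h := by ext v; simp [inner_smul_right]

/-- For `B : Y → X'`, the operator `B~ := B'↾X : X → Y'`, `(B~ x) y = conj (⟨B y, x⟩)`. -/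
def Btilde {X Y : Type*} [AddCommGroup X] [Module ℂ X] [AddCommGroup Y] [Module ℂ Y]
    (B : Y →ₗ[ℂ] (X →ₗ⋆[ℂ] ℂ)) : X →ₗ[ℂ] (Y →ₗ⋆[ℂ] ℂ) where
  toFun x :=
    { toFun := fun y => conj (B y x)
      map_add' := fun y₁ y₂ => by simp
      map_smul' := fun c y => by simp }
  map_add' x₁ x₂ := by ext y; simp
  map_smul' c x := by ext y; simp

theorem schur_stmt0 {X H : Type} [AddCommGroup X] [Module ℂ X]
    [NormedAddCommGroup H] [InnerProductSpace ℂ H] [CompleteSpace H]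
    (R : X →ₗ[ℂ] H) (x' : X →ₗ⋆[ℂ] ℂ) :
    x' ∈ Set.range (adjMap R) ↔
      (∀ x, R x = 0 → x' x = 0) ∧
        BddAbove (Set.range fun x => ‖x' x‖ ^ 2 / ‖R x‖ ^ 2) := by
  constructor
  · rintro ⟨h, rfl⟩
    constructor
    · intro x hx
      show inner ℂ (R x) h = 0
      simp [hx]
    · refine ⟨‖h‖ ^ 2, ?_⟩
      rintro r ⟨x, rfl⟩
      show ‖inner ℂ (R x) h‖ ^ 2 / ‖R x‖ ^ 2 ≤ ‖h‖ ^ 2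
      by_cases hx : R x = 0
      · simp [hx]
      · rw [div_le_iff₀ (pow_pos (norm_pos_iff.mpr hx) 2)]
        have := norm_inner_le_norm (𝕜 := ℂ) (R x) h
        calc ‖inner ℂ (R x) h‖ ^ 2 ≤ (‖R x‖ * ‖h‖) ^ 2 := by
              apply pow_le_pow_left₀ (norm_nonneg _) this
          _ = ‖h‖ ^ 2 * ‖R x‖ ^ 2 := by ring
  · rintro ⟨h1, C, hC⟩
    have hC' : ∀ x, ‖x' x‖ ^ 2 / ‖R x‖ ^ 2 ≤ C := fun x => hC ⟨x, rfl⟩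
    have hC0 : 0 ≤ C := le_trans (by simp) (hC' 0)
    set c := Real.sqrt C with hc
    have hbnd : ∀ x, ‖x' x‖ ≤ c * ‖R x‖ := by
      intro x
      by_cases hx : R x = 0
      · simp [h1 x hx, hx, mul_nonneg (Real.sqrt_nonneg C) (norm_nonneg _)]
      · have h2 : ‖x' x‖ ^ 2 ≤ C * ‖R x‖ ^ 2 := by
          have := hC' x
          rw [div_le_iff₀ (pow_pos (norm_pos_iff.mpr hx) 2)] at this
          linarith
        calc ‖x' x‖ = Real.sqrt (‖x' x‖ ^ 2) := by
                rw [Real.sqrt_sq (norm_nonneg _)]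
          _ ≤ Real.sqrt (C * ‖R x‖ ^ 2) := Real.sqrt_le_sqrt h2
          _ = c * ‖R x‖ := by
                rw [Real.sqrt_mul hC0, Real.sqrt_sq (norm_nonneg _)]
    -- linear functional ℓ x = conj (x' x)
    let ℓ : X →ₗ[ℂ] ℂ :=
      { toFun := fun x => conj (x' x)
        map_add' := fun a b => by simp
        map_smul' := fun a b => by simp }
    have hker : LinearMap.ker R ≤ LinearMap.ker ℓ := by
      intro x hx
      simp only [LinearMap.mem_ker] at hx ⊢
      simp [ℓ, h1 x hx]
    let g : LinearMap.range R →ₗ[ℂ] ℂ :=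
      ((LinearMap.ker R).liftQ ℓ hker).comp R.quotKerEquivRange.symm.toLinearMap
    have hg : ∀ x : X, g ⟨R x, ⟨x, rfl⟩⟩ = conj (x' x) := by
      intro x
      have : R.quotKerEquivRange.symm ⟨R x, ⟨x, rfl⟩⟩ = Submodule.Quotient.mk x :=
        R.quotKerEquivRange_symm_apply_image x ⟨x, rfl⟩
      simp [g, this, Submodule.liftQ_apply, ℓ]
    have hgb : ∀ y : LinearMap.range R, ‖g y‖ ≤ c * ‖y‖ := by
      rintro ⟨y, x, rfl⟩
      rw [hg x]
      simpa using hbnd x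
    let gc : LinearMap.range R →L[ℂ] ℂ := g.mkContinuous c hgb
    obtain ⟨G, hG, -⟩ := exists_extension_norm_eq (LinearMap.range R) gc
    refine ⟨(InnerProductSpace.toDual ℂ H).symm G, ?_⟩
    ext x
    show inner ℂ (R x) ((InnerProductSpace.toDual ℂ H).symm G) = x' x
    have h3 : @inner ℂ _ _ ((InnerProductSpace.toDual ℂ H).symm G) (R x) = G (R x) :=
      InnerProductSpace.toDual_symm_apply
    rw [← inner_conj_symm, h3]
    have h4 : G (R x) = gc ⟨R x, ⟨x, rfl⟩⟩ := hG ⟨R x, ⟨x, rfl⟩⟩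
    rw [h4]
    show conj (g ⟨R x, ⟨x, rfl⟩⟩) = x' x
    rw [hg x, Complex.conj_conj]
end
end

section
/- Let A, D : X → X' be non-negative with square roots (R_A, H_A), (R_D, H_D). (i) If A ≤ α²D for some α ≥ 0, then ran R_A* ⊆ ran R_D*. (ii) If β²D ≤ A ≤ α²D for some α, β > 0, then ran R_A* = ran R_D*. (iii) If (S_A, G_A) is another square root of A, then ran R_A* = ran S_A* (the range of the adjoint of a square root depends only on A). -/
open scoped ComplexOrder ComplexConjugate
open Complex

noncomputable section

lemma adjMap_apply {V H : Type*} [AddCommGroup V] [Module ℂ V]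
    [NormedAddCommGroup H] [InnerProductSpace ℂ H] (R : V →ₗ[ℂ] H) (h : H) (v : V) :
    adjMap R h v = @inner ℂ _ _ (R v) h := rfl

lemma range_adjMap_subset {X HA HD : Type*} [AddCommGroup X] [Module ℂ X]
    [NormedAddCommGroup HA] [InnerProductSpace ℂ HA]
    [NormedAddCommGroup HD] [InnerProductSpace ℂ HD] [CompleteSpace HD]
    (RA : X →ₗ[ℂ] HA) (RD : X →ₗ[ℂ] HD) (c : ℝ)
    (hle : ∀ x, ‖RA x‖ ≤ c * ‖RD x‖) :
    Set.range (adjMap RA) ⊆ Set.range (adjMap RD) := by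
  rintro _ ⟨h, rfl⟩
  -- the linear functional x ↦ ⟪h, RA x⟫
  set φ : X →ₗ[ℂ] ℂ := ((innerSL ℂ h : HA →L[ℂ] ℂ) : HA →ₗ[ℂ] ℂ).comp RA with hφ
  have hφ_apply : ∀ x, φ x = @inner ℂ _ _ h (RA x) := fun x => rfl
  have hker : LinearMap.ker RD ≤ LinearMap.ker φ := by
    intro x hx
    have hx' : RD x = 0 := hx
    have : ‖RA x‖ ≤ 0 := by simpa [hx'] using hle x
    have hRAx : RA x = 0 := by
      have := le_antisymm this (norm_nonneg _)
      simpa using this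
    simp [LinearMap.mem_ker, hφ_apply, hRAx]
  set ψ : LinearMap.range RD →ₗ[ℂ] ℂ :=
    (Submodule.liftQ (LinearMap.ker RD) φ hker).comp
      (RD.quotKerEquivRange.symm : LinearMap.range RD →ₗ[ℂ] X ⧸ LinearMap.ker RD) with hψ
  have hψ_apply : ∀ x : X, ψ ⟨RD x, LinearMap.mem_range_self RD x⟩ = φ x := by
    intro x
    have h1 : RD.quotKerEquivRange (Submodule.Quotient.mk x)
        = ⟨RD x, LinearMap.mem_range_self RD x⟩ :=
      Subtype.ext (LinearMap.quotKerEquivRange_apply_mk RD x)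
    have h2 : RD.quotKerEquivRange.symm ⟨RD x, LinearMap.mem_range_self RD x⟩
        = Submodule.Quotient.mk x := by rw [← h1]; exact RD.quotKerEquivRange.symm_apply_apply _
    simp [hψ, h2]
  have hbound : ∀ n : LinearMap.range RD, ‖ψ n‖ ≤ (c * ‖h‖) * ‖n‖ := by
    rintro ⟨_, x, rfl⟩
    rw [hψ_apply x, hφ_apply x]
    calc ‖@inner ℂ _ _ h (RA x)‖ ≤ ‖h‖ * ‖RA x‖ := norm_inner_le_norm _ _
      _ ≤ ‖h‖ * (c * ‖RD x‖) := by
          exact mul_le_mul_of_nonneg_left (hle x) (norm_nonneg _)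
      _ = (c * ‖h‖) * ‖RD x‖ := by ring
      _ = (c * ‖h‖) * ‖(⟨RD x, LinearMap.mem_range_self RD x⟩ : LinearMap.range RD)‖ := rfl
  set Ψ : LinearMap.range RD →L[ℂ] ℂ := ψ.mkContinuous (c * ‖h‖) hbound with hΨ
  obtain ⟨g, hg, -⟩ := exists_extension_norm_eq (LinearMap.range RD) Ψ
  refine ⟨(InnerProductSpace.toDual ℂ HD).symm g, ?_⟩
  ext x
  have h1 : @inner ℂ _ _ ((InnerProductSpace.toDual ℂ HD).symm g) (RD x) = g (RD x) :=
    InnerProductSpace.toDual_symm_apply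
  have h2 : g (RD x) = φ x := by
    have := hg ⟨RD x, LinearMap.mem_range_self RD x⟩
    rw [this]
    show ψ _ = _
    exact hψ_apply x
  rw [adjMap_apply, adjMap_apply, ← inner_conj_symm, h1, h2, hφ_apply, inner_conj_symm]
lemma norm_sq_eval {X H : Type*} [AddCommGroup X] [Module ℂ X]
    [NormedAddCommGroup H] [InnerProductSpace ℂ H]
    (A : X →ₗ[ℂ] (X →ₗ⋆[ℂ] ℂ)) (R : X →ₗ[ℂ] H)
    (hR : ∀ x, A x = adjMap R (R x)) (x : X) :
    A x x = ((‖R x‖ : ℂ)) ^ 2 := by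
  rw [hR x, adjMap_apply, inner_self_eq_norm_sq_to_K]; norm_cast

theorem schur_stmt4 {X HA HD GA : Type} [AddCommGroup X] [Module ℂ X]
    [NormedAddCommGroup HA] [InnerProductSpace ℂ HA] [CompleteSpace HA]
    [NormedAddCommGroup HD] [InnerProductSpace ℂ HD] [CompleteSpace HD]
    [NormedAddCommGroup GA] [InnerProductSpace ℂ GA] [CompleteSpace GA]
    (A D : X →ₗ[ℂ] (X →ₗ⋆[ℂ] ℂ))
    (RA : X →ₗ[ℂ] HA) (RD : X →ₗ[ℂ] HD) (SA : X →ₗ[ℂ] GA)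
    (hA : ∀ x, 0 ≤ A x x) (hD : ∀ x, 0 ≤ D x x)
    (hRA : ∀ x, A x = adjMap RA (RA x)) (hRD : ∀ x, D x = adjMap RD (RD x))
    (hSA : ∀ x, A x = adjMap SA (SA x)) :
    ((∃ α : ℝ, 0 ≤ α ∧ ∀ x, A x x ≤ (α : ℂ) ^ 2 * D x x) →
        Set.range (adjMap RA) ⊆ Set.range (adjMap RD)) ∧
      ((∃ α β : ℝ, 0 < α ∧ 0 < β ∧
          ∀ x, (β : ℂ) ^ 2 * D x x ≤ A x x ∧ A x x ≤ (α : ℂ) ^ 2 * D x x) →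
        Set.range (adjMap RA) = Set.range (adjMap RD)) ∧
      Set.range (adjMap RA) = Set.range (adjMap SA) := by
  -- real reformulation of upper bound
  have upper : ∀ (α : ℝ), 0 ≤ α → (∀ x, A x x ≤ (α : ℂ) ^ 2 * D x x) →
      ∀ x, ‖RA x‖ ≤ α * ‖RD x‖ := by
    intro α hα hle x
    have h1 := hle x
    rw [norm_sq_eval A RA hRA x, norm_sq_eval D RD hRD x] at h1
    have h2 : ((‖RA x‖ ^ 2 : ℝ) : ℂ) ≤ (((α * ‖RD x‖) ^ 2 : ℝ) : ℂ) := by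
      push_cast; ring_nf; ring_nf at h1; exact h1
    have h3 : ‖RA x‖ ^ 2 ≤ (α * ‖RD x‖) ^ 2 := by exact_mod_cast h2
    nlinarith [norm_nonneg (RA x), norm_nonneg (RD x), mul_nonneg hα (norm_nonneg (RD x))]
  have lower : ∀ (β : ℝ), 0 < β → (∀ x, (β : ℂ) ^ 2 * D x x ≤ A x x) →
      ∀ x, ‖RD x‖ ≤ β⁻¹ * ‖RA x‖ := by
    intro β hβ hle x
    have h1 := hle x
    rw [norm_sq_eval A RA hRA x, norm_sq_eval D RD hRD x] at h1
    have h2 : (((β * ‖RD x‖) ^ 2 : ℝ) : ℂ) ≤ ((‖RA x‖ ^ 2 : ℝ) : ℂ) := by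
      push_cast; ring_nf; ring_nf at h1; exact h1
    have h3 : (β * ‖RD x‖) ^ 2 ≤ ‖RA x‖ ^ 2 := by exact_mod_cast h2
    have h4 : β * ‖RD x‖ ≤ ‖RA x‖ := by
      nlinarith [norm_nonneg (RA x), norm_nonneg (RD x), mul_nonneg hβ.le (norm_nonneg (RD x))]
    calc ‖RD x‖ = β⁻¹ * (β * ‖RD x‖) := by field_simp
      _ ≤ β⁻¹ * ‖RA x‖ := mul_le_mul_of_nonneg_left h4 (inv_pos.mpr hβ).le
  refine ⟨?_, ?_, ?_⟩
  · rintro ⟨α, hα, hle⟩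
    exact range_adjMap_subset RA RD α (upper α hα hle)
  · rintro ⟨α, β, hα, hβ, hle⟩
    refine le_antisymm (range_adjMap_subset RA RD α (upper α hα.le fun x => (hle x).2)) ?_
    exact range_adjMap_subset RD RA β⁻¹ (lower β hβ fun x => (hle x).1)
  · have hnorm : ∀ x, ‖RA x‖ = ‖SA x‖ := by
      intro x
      have h1 : ((‖RA x‖ : ℂ)) ^ 2 = ((‖SA x‖ : ℂ)) ^ 2 := by
        rw [← norm_sq_eval A RA hRA x, ← norm_sq_eval A SA hSA x]
      have h2 : (‖RA x‖ : ℝ) ^ 2 = (‖SA x‖ : ℝ) ^ 2 := by exact_mod_cast h1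
      nlinarith [norm_nonneg (RA x), norm_nonneg (SA x)]
    refine le_antisymm (range_adjMap_subset RA SA 1 fun x => by rw [hnorm x, one_mul])
      (range_adjMap_subset SA RA 1 fun x => by rw [← hnorm x, one_mul])
end
end

section
/- Let H₁, H₂ be Hilbert spaces and R_j : X → H_j linear maps, j = 1, 2. If (R, H) is a square root of the non-negative operator A := R₁*R₁ + R₂*R₂, then ran R* = ran R₁* + ran R₂*. -/
open scoped ComplexOrder ComplexConjugate
open Complex

noncomputable section

open scoped InnerProductSpace
open Filter Topology

lemma key_sqrt {X E F : Type*} [AddCommGroup X] [Module ℂ X]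
    [NormedAddCommGroup E] [InnerProductSpace ℂ E] [CompleteSpace E]
    [NormedAddCommGroup F] [InnerProductSpace ℂ F] [CompleteSpace F]
    (R : X →ₗ[ℂ] E) (S : X →ₗ[ℂ] F)
    (hRS : ∀ x y : X, ⟪R y, R x⟫_ℂ = ⟪S y, S x⟫_ℂ) (e : E) :
    ∃ f : F, ∀ y, ⟪S y, f⟫_ℂ = ⟪R y, e⟫_ℂ := by
  set K := (LinearMap.range R).topologicalClosure with hK
  haveI : CompleteSpace K := (LinearMap.range R).isClosed_topologicalClosure.completeSpace_coe
  set e₀ : E := (K.orthogonalProjectionOnto e : E) with he₀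
  have hinner : ∀ y, ⟪R y, e₀⟫_ℂ = ⟪R y, e⟫_ℂ := by
    intro y
    have hmem : R y ∈ K := (LinearMap.range R).le_topologicalClosure ⟨y, rfl⟩
    have horth := Submodule.sub_starProjection_mem_orthogonal (K := K) e
    have := horth (R y) hmem
    rw [inner_sub_right, sub_eq_zero] at this
    exact this.symm
  have he₀K : (e₀ : E) ∈ closure (Set.range R) := by
    have h1 : e₀ ∈ ((LinearMap.range R).topologicalClosure : Set E) :=
      (K.orthogonalProjectionOnto e).2
    rw [Submodule.topologicalClosure_coe] at h1
    rwa [LinearMap.coe_range] at h1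
  obtain ⟨u, hu_mem, hu_lim⟩ := mem_closure_iff_seq_limit.1 he₀K
  choose x hx using hu_mem
  have hu : u = fun n => R (x n) := funext fun n => (hx n).symm
  rw [hu] at hu_lim
  have hnorm : ∀ z, ‖R z‖ = ‖S z‖ := by
    intro z
    have h1 := hRS z z
    rw [inner_self_eq_norm_sq_to_K, inner_self_eq_norm_sq_to_K] at h1
    have h2 : ‖R z‖ ^ 2 = ‖S z‖ ^ 2 := by exact_mod_cast h1
    nlinarith [norm_nonneg (R z), norm_nonneg (S z)]
  have hd : ∀ n m, dist (S (x n)) (S (x m)) = dist (R (x n)) (R (x m)) := by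
    intro n m
    simp only [dist_eq_norm, ← map_sub, hnorm]
  have hcR : CauchySeq (fun n => R (x n)) := hu_lim.cauchySeq
  have hcS : CauchySeq (fun n => S (x n)) := by
    rw [Metric.cauchySeq_iff] at hcR ⊢
    intro ε hε
    obtain ⟨N, hN⟩ := hcR ε hε
    exact ⟨N, fun m hm n hn => by rw [hd]; exact hN m hm n hn⟩
  obtain ⟨f, hf⟩ := cauchySeq_tendsto_of_complete hcS
  refine ⟨f, fun y => ?_⟩
  have h1 : Tendsto (fun n => ⟪S y, S (x n)⟫_ℂ) atTop (𝓝 ⟪S y, f⟫_ℂ) :=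
    (tendsto_const_nhds : Tendsto (fun _ : ℕ => S y) atTop _).inner hf
  have h2 : Tendsto (fun n => ⟪S y, S (x n)⟫_ℂ) atTop (𝓝 ⟪R y, e₀⟫_ℂ) := by
    have : (fun n => ⟪S y, S (x n)⟫_ℂ) = fun n => ⟪R y, R (x n)⟫_ℂ :=
      funext fun n => (hRS (x n) y).symm
    rw [this]
    exact (tendsto_const_nhds : Tendsto (fun _ : ℕ => R y) atTop _).inner hu_lim
  rw [tendsto_nhds_unique h1 h2, hinner]

theorem schur_stmt5 {X H H₁ H₂ : Type} [AddCommGroup X] [Module ℂ X]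
    [NormedAddCommGroup H] [InnerProductSpace ℂ H] [CompleteSpace H]
    [NormedAddCommGroup H₁] [InnerProductSpace ℂ H₁] [CompleteSpace H₁]
    [NormedAddCommGroup H₂] [InnerProductSpace ℂ H₂] [CompleteSpace H₂]
    (R : X →ₗ[ℂ] H) (R₁ : X →ₗ[ℂ] H₁) (R₂ : X →ₗ[ℂ] H₂)
    (hR : ∀ x, adjMap R (R x) = adjMap R₁ (R₁ x) + adjMap R₂ (R₂ x)) :
    Set.range (adjMap R) =
      {f : X →ₗ⋆[ℂ] ℂ | ∃ h₁ h₂, f = adjMap R₁ h₁ + adjMap R₂ h₂} := by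
  have hR' : ∀ x y : X, ⟪R y, R x⟫_ℂ = ⟪R₁ y, R₁ x⟫_ℂ + ⟪R₂ y, R₂ x⟫_ℂ := fun x y => by
    have := LinearMap.congr_fun (hR x) y
    simpa [adjMap] using this
  set S : X →ₗ[ℂ] WithLp 2 (H₁ × H₂) :=
    (WithLp.linearEquiv 2 ℂ (H₁ × H₂)).symm.toLinearMap ∘ₗ (R₁.prod R₂) with hS
  have hRS : ∀ x y : X, ⟪R y, R x⟫_ℂ = ⟪S y, S x⟫_ℂ := fun x y => by
    rw [hR' x y]; rfl
  have hSf : ∀ (f : WithLp 2 (H₁ × H₂)) (y : X),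
      ⟪S y, f⟫_ℂ = ⟪R₁ y, f.fst⟫_ℂ + ⟪R₂ y, f.snd⟫_ℂ := fun f y => rfl
  ext g
  constructor
  · rintro ⟨h, rfl⟩
    obtain ⟨f, hf⟩ := key_sqrt R S hRS h
    refine ⟨f.fst, f.snd, ?_⟩
    ext y
    have := (hf y).symm
    rw [hSf] at this
    simpa [adjMap] using this
  · rintro ⟨h₁, h₂, rfl⟩
    obtain ⟨h, hh⟩ := key_sqrt S R (fun x y => (hRS x y).symm)
      ((WithLp.equiv 2 (H₁ × H₂)).symm (h₁, h₂))
    refine ⟨h, ?_⟩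
    ext y
    have := hh y
    rw [hSf] at this
    simpa [adjMap] using this
end
end

section
/- Let A : X → X' be non-negative and B : Y → X' linear. The pair (A, B) is a positive pair (i.e., ran B ⊆ ran R* for some, and hence every, square root (R, H) of A) if and only if for every y ∈ Y: (i) ⟨By, x⟩ = 0 for all x ∈ ker A, and (ii) sup over x ∈ X of |⟨By, x⟩|²/⟨Ax, x⟩ is finite (with 0/0 := 0). -/
open scoped ComplexOrder ComplexConjugate
open Complex

noncomputable section

theorem schur_stmt7 {X Y H : Type} [AddCommGroup X] [Module ℂ X]
    [AddCommGroup Y] [Module ℂ Y]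
    [NormedAddCommGroup H] [InnerProductSpace ℂ H] [CompleteSpace H]
    (A : X →ₗ[ℂ] (X →ₗ⋆[ℂ] ℂ)) (B : Y →ₗ[ℂ] (X →ₗ⋆[ℂ] ℂ)) (R : X →ₗ[ℂ] H)
    (hA : ∀ x, 0 ≤ A x x) (hR : ∀ x, A x = adjMap R (R x)) :
    (∀ y, B y ∈ Set.range (adjMap R)) ↔
      ∀ y, (∀ x, A x = 0 → B y x = 0) ∧
        BddAbove (Set.range fun x => ‖B y x‖ ^ 2 / (A x x).re) := by
  have hAx : ∀ x, A x x = (‖R x‖ : ℂ) ^ 2 := by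
    intro x
    rw [hR x]
    show (inner ℂ (R x) (R x) : ℂ) = _
    rw [inner_self_eq_norm_sq_to_K]
    norm_num
  have hre : ∀ x, (A x x).re = ‖R x‖ ^ 2 := by
    intro x; rw [hAx x, ← Complex.ofReal_pow, Complex.ofReal_re]
  have hRzero : ∀ x : X, R x = 0 → A x = 0 := by
    intro x hx
    ext z
    rw [hR x]
    show (inner ℂ (R z) (R x) : ℂ) = 0
    simp [hx]
  have hARzero : ∀ x : X, A x = 0 → R x = 0 := by
    intro x hx
    have h0 : A x x = 0 := by rw [hx]; rfl
    rw [hAx x] at h0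
    have : (‖R x‖ : ℂ) = 0 := by
      exact pow_eq_zero_iff (n := 2) (by norm_num) |>.mp h0
    simpa [norm_eq_zero] using this
  constructor
  · rintro hrange y
    obtain ⟨h, hh⟩ := hrange y
    have hBx : ∀ x, B y x = (inner ℂ (R x) h : ℂ) := by
      intro x; rw [← hh]; rfl
    constructor
    · intro x hx
      rw [hBx x, hARzero x hx]
      simp
    · refine ⟨‖h‖ ^ 2, ?_⟩
      rintro _ ⟨x, rfl⟩
      simp only
      rw [hre x, hBx x]
      rcases eq_or_ne (R x) 0 with h0 | h0
      · simp [h0]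
      · rw [div_le_iff₀ (pow_pos (norm_pos_iff.mpr h0) 2)]
        have h1 : ‖(inner ℂ (R x) h : ℂ)‖ ≤ ‖R x‖ * ‖h‖ := norm_inner_le_norm _ _
        nlinarith [norm_nonneg (inner ℂ (R x) h : ℂ), norm_nonneg (R x), norm_nonneg h]
  · intro hcond y
    obtain ⟨h0, C, hC⟩ := hcond y
    have hB0 : ∀ x : X, R x = 0 → B y x = 0 := fun x hx => h0 x (hRzero x hx)
    have hCnn : 0 ≤ C := by
      have := hC ⟨0, rfl⟩
      simpa [hB0 0 (map_zero R)] using this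
    have hbound : ∀ x, ‖B y x‖ ^ 2 ≤ C * ‖R x‖ ^ 2 := by
      intro x
      rcases eq_or_ne (R x) 0 with hx | hx
      · simp [hB0 x hx, hx]
      · have h4 : ‖B y x‖ ^ 2 / (A x x).re ≤ C := hC ⟨x, rfl⟩
        rw [hre x] at h4
        have this := h4
        have hpos : (0:ℝ) < ‖R x‖ ^ 2 := pow_pos (norm_pos_iff.mpr hx) 2
        calc ‖B y x‖ ^ 2 = ‖B y x‖ ^ 2 / ‖R x‖ ^ 2 * ‖R x‖ ^ 2 := by
              field_simp
          _ ≤ C * ‖R x‖ ^ 2 := by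
              exact mul_le_mul_of_nonneg_right this hpos.le
    -- build the linear functional g x = conj (B y x)
    let g : X →ₗ[ℂ] ℂ :=
      { toFun := fun x => conj (B y x)
        map_add' := fun a b => by simp
        map_smul' := fun c a => by simp }
    have hker : LinearMap.ker R ≤ LinearMap.ker g := by
      intro x hx
      have : B y x = 0 := hB0 x hx
      simp [g, this]
    let e := LinearMap.quotKerEquivRange R
    let f : LinearMap.range R →ₗ[ℂ] ℂ :=
      ((LinearMap.ker R).liftQ g hker).comp (e.symm : LinearMap.range R →ₗ[ℂ] _)
    have hf : ∀ x : X, f (R.rangeRestrict x) = conj (B y x) := by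
      intro x
      have h1 : e (Submodule.Quotient.mk x) = R.rangeRestrict x :=
        Subtype.ext (LinearMap.quotKerEquivRange_apply_mk R x)
      have : f (R.rangeRestrict x) = ((LinearMap.ker R).liftQ g hker)
          (e.symm (e (Submodule.Quotient.mk x))) := by rw [h1]; rfl
      rw [this, LinearEquiv.symm_apply_apply, Submodule.liftQ_apply]
      rfl
    have hfbound : ∀ v : LinearMap.range R, ‖f v‖ ≤ Real.sqrt C * ‖v‖ := by
      rintro ⟨v, hv⟩
      obtain ⟨x, rfl⟩ := hv
      have hv' : (⟨R x, ⟨x, rfl⟩⟩ : LinearMap.range R) = R.rangeRestrict x := rfl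
      rw [hv', hf x]
      have hnv : ‖(R.rangeRestrict x : H)‖ = ‖R x‖ := rfl
      have h2 : ‖conj (B y x)‖ = ‖B y x‖ := by simp
      rw [h2, show ‖R.rangeRestrict x‖ = ‖R x‖ from rfl]
      have := hbound x
      have h3 : ‖B y x‖ ≤ Real.sqrt (C * ‖R x‖ ^ 2) := by
        rw [show ‖B y x‖ = Real.sqrt (‖B y x‖ ^ 2) from (Real.sqrt_sq (norm_nonneg _)).symm]
        exact Real.sqrt_le_sqrt this
      rwa [Real.sqrt_mul hCnn, Real.sqrt_sq (norm_nonneg _)] at h3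
    let F : LinearMap.range R →L[ℂ] ℂ := LinearMap.mkContinuous f (Real.sqrt C) hfbound
    obtain ⟨G, hGext, _⟩ := exists_extension_norm_eq (LinearMap.range R) F
    refine ⟨(InnerProductSpace.toDual ℂ H).symm G, ?_⟩
    ext x
    show (inner ℂ (R x) ((InnerProductSpace.toDual ℂ H).symm G) : ℂ) = B y x
    have h1 : (inner ℂ ((InnerProductSpace.toDual ℂ H).symm G) (R x) : ℂ) = G (R x) :=
      InnerProductSpace.toDual_symm_apply
    have h2 : G (R x) = f (R.rangeRestrict x) := hGext (R.rangeRestrict x)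
    rw [← inner_conj_symm, h1, h2, hf x]
    simp
end
end

section
/- Let 𝐀 = [[A, B], [B~, D]] : X × Y → X' × Y' be an operator of positive type, i.e., 𝐀 is Hermitian and (A, B) is a positive pair. If 𝐀(x, y) = (0, y') for some (x, y) ∈ X × Y and y' ∈ Y', then (0, y') lies in the range of the shorted operator 𝒮(𝐀) = [[0, 0], [0, σ(𝐀)]]. In other words, ran 𝐀 ∩ Y' ⊆ ran 𝒮(𝐀). -/
open scoped ComplexOrder ComplexConjugate
open Complex

noncomputable section

theorem schur_stmt8 {X Y H : Type} [AddCommGroup X] [Module ℂ X]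
    [AddCommGroup Y] [Module ℂ Y]
    [NormedAddCommGroup H] [InnerProductSpace ℂ H] [CompleteSpace H]
    (A : X →ₗ[ℂ] (X →ₗ⋆[ℂ] ℂ)) (B : Y →ₗ[ℂ] (X →ₗ⋆[ℂ] ℂ))
    (D : Y →ₗ[ℂ] (Y →ₗ⋆[ℂ] ℂ))
    (R : X →ₗ[ℂ] H) (T : Y →ₗ[ℂ] H)
    (hDh : ∀ y₁ y₂, D y₁ y₂ = conj (D y₂ y₁))
    (hR : ∀ x, A x = adjMap R (R x))
    (hT : ∀ y, adjMap R (T y) = B y)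
    (hTran : ∀ y, T y ∈ closure (Set.range R))
    (x : X) (y : Y) (y' : Y →ₗ⋆[ℂ] ℂ)
    (h₁ : A x + B y = 0) (h₂ : Btilde B x + D y = y') :
    ∃ y₀ : Y, y' = D y₀ - adjMap T (T y₀) := by
  refine ⟨y, ?_⟩
  have horth : ∀ w : X, (inner ℂ (R w) (R x + T y) : ℂ) = 0 := by
    intro w
    have h := congrArg (fun f : X →ₗ⋆[ℂ] ℂ => f w) h₁
    simp only [LinearMap.add_apply, LinearMap.zero_apply] at h
    rw [hR x, ← hT y] at h
    simpa [adjMap, inner_add_right] using h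
  have key : ∀ z : Y, (inner ℂ (T z) (R x + T y) : ℂ) = 0 := by
    intro z
    have hcl : IsClosed {h : H | (inner ℂ h (R x + T y) : ℂ) = 0} := by
      have : Continuous fun h : H => (inner ℂ h (R x + T y) : ℂ) :=
        continuous_id.inner continuous_const
      exact isClosed_eq this continuous_const
    have hsub : closure (Set.range R) ⊆ {h : H | (inner ℂ h (R x + T y) : ℂ) = 0} := by
      apply closure_minimal _ hcl
      rintro _ ⟨w, rfl⟩
      exact horth w
    exact hsub (hTran z)
  ext z
  have hz : (inner ℂ (T z) (R x) : ℂ) + inner ℂ (T z) (T y) = 0 := by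
    simpa [inner_add_right] using key z
  have hBx : (Btilde B x) z = inner ℂ (T z) (R x) := by
    have : B z x = inner ℂ (R x) (T z) := by rw [← hT z]; rfl
    simp [Btilde, this, inner_conj_symm]
  have := congrArg (fun f : Y →ₗ⋆[ℂ] ℂ => f z) h₂
  simp only [LinearMap.add_apply] at this
  rw [← this, hBx]
  simp only [LinearMap.sub_apply]
  have hTT : (adjMap T (T y)) z = inner ℂ (T z) (T y) := rfl
  rw [hTT]
  linear_combination hz
end
end

section
/- Let 𝐀 be a non-negative operator on X × Y with square root (R, H). Let L be the orthogonal complement of the closure of R(X × {0}) in H and P the orthogonal projection onto L. Then 𝒮(𝐀) = R* P R. -/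
open scoped ComplexOrder ComplexConjugate
open Complex

noncomputable section

/-- Pythagoras: the squared distance from `u` to a point `m` of `K` splits as the squared
distance to the orthogonal projection plus the squared distance of the projection to `m`. -/
lemma pyth_aux {H : Type*} [NormedAddCommGroup H] [InnerProductSpace ℂ H]
    (K : Submodule ℂ H) [K.HasOrthogonalProjection] (u m : H) (hm : m ∈ K) :
    ‖u - m‖ ^ 2 = ‖u - (Submodule.orthogonalProjection K u : H)‖ ^ 2 +
      ‖(Submodule.orthogonalProjection K u : H) - m‖ ^ 2 := by
  have h1 : u - m = (u - (Submodule.orthogonalProjection K u : H)) +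
      ((Submodule.orthogonalProjection K u : H) - m) := by abel
  rw [h1]
  simp only [pow_two]
  rw [norm_add_sq_eq_norm_sq_add_norm_sq_of_inner_eq_zero (𝕜 := ℂ)]
  exact Submodule.inner_left_of_mem_orthogonal
    (Submodule.sub_mem _ (Submodule.orthogonalProjection K u).2 hm)
    (Submodule.sub_starProjection_mem_orthogonal u)

theorem schur_stmt11 {X Y H : Type} [AddCommGroup X] [Module ℂ X]
    [AddCommGroup Y] [Module ℂ Y]
    [NormedAddCommGroup H] [InnerProductSpace ℂ H] [CompleteSpace H]
    (R : (X × Y) →ₗ[ℂ] H)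
    (S : (X × Y) →ₗ[ℂ] ((X × Y) →ₗ⋆[ℂ] ℂ))
    (hSh : ∀ w₁ w₂, S w₁ w₂ = conj (S w₂ w₁))
    (hS : ∀ w : X × Y,
      IsGLB (Set.range fun z : X =>
          ((adjMap R (R (w - (z, 0)))) (w - (z, 0))).re) ((S w w).re)) :
    ∀ w w' : X × Y,
      S w w' = @inner ℂ _ _ (R w')
        (R w - (Submodule.orthogonalProjection
          ((Submodule.map R (LinearMap.range (LinearMap.inl ℂ X Y))).topologicalClosure)
          (R w) : H)) := by
  set M : Submodule ℂ H := Submodule.map R (LinearMap.range (LinearMap.inl ℂ X Y)) with hM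
  set K : Submodule ℂ H := M.topologicalClosure with hK
  set g : (X × Y) → H := fun v => R v - (Submodule.orthogonalProjection K (R v) : H) with hg
  have hgadd : ∀ v₁ v₂, g (v₁ + v₂) = g v₁ + g v₂ := by
    intro v₁ v₂
    simp only [hg, map_add, Submodule.coe_add]
    abel
  have hgsmul : ∀ (c : ℂ) v, g (c • v) = c • g v := by
    intro c v
    simp only [hg, map_smul, Submodule.coe_smul, smul_sub]
  have hgmem : ∀ v, g v ∈ Kᗮ := fun v =>
    Submodule.sub_starProjection_mem_orthogonal (K := K) (R v)
  -- the diagonal values of S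
  have hdiag : ∀ v : X × Y, S v v = @inner ℂ _ _ (g v) (g v) := by
    intro v
    have him : (S v v).im = 0 := by
      have h := congrArg Complex.im (hSh v v)
      simp only [Complex.conj_im] at h
      linarith
    have hre : (S v v).re = ‖g v‖ ^ 2 := by
      have hfun : (fun z : X => ((adjMap R (R (v - (z, 0)))) (v - (z, 0))).re) =
          fun z : X => ‖R v - R (z, 0)‖ ^ 2 := by
        funext z
        show (@inner ℂ _ _ (R (v - (z, 0))) (R (v - (z, 0)))).re = _
        rw [map_sub, @inner_self_eq_norm_sq_to_K ℂ]
        simp [← Complex.ofReal_pow]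
      have hglb : IsGLB (Set.range fun z : X => ‖R v - R (z, 0)‖ ^ 2) (‖g v‖ ^ 2) := by
        constructor
        · rintro x ⟨z, rfl⟩
          have hm : R (z, 0) ∈ K :=
            M.le_topologicalClosure ⟨(z, 0), ⟨z, rfl⟩, rfl⟩
          show ‖g v‖ ^ 2 ≤ ‖R v - R (z, 0)‖ ^ 2
          rw [pyth_aux K (R v) _ hm]
          exact le_add_of_nonneg_right (sq_nonneg _)
        · intro b hb
          by_contra hlt
          push_neg at hlt
          have hPK : (Submodule.orthogonalProjection K (R v) : H) ∈ closure (M : Set H) :=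
            (Submodule.orthogonalProjection K (R v)).2
          have hε : (0 : ℝ) < Real.sqrt (b - ‖g v‖ ^ 2) := Real.sqrt_pos.2 (by linarith)
          obtain ⟨m, hmM, hmd⟩ := Metric.mem_closure_iff.1 hPK _ hε
          obtain ⟨-, ⟨z, rfl⟩, rfl⟩ := hmM
          have hb' : b ≤ ‖R v - R ((LinearMap.inl ℂ X Y) z)‖ ^ 2 := hb ⟨z, rfl⟩
          have heq := pyth_aux K (R v) (R ((LinearMap.inl ℂ X Y) z))
            (M.le_topologicalClosure ⟨(z, 0), ⟨z, rfl⟩, rfl⟩)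
          rw [dist_eq_norm] at hmd
          have hsq : ‖(Submodule.orthogonalProjection K (R v) : H) - R ((LinearMap.inl ℂ X Y) z)‖ ^ 2
              < b - ‖g v‖ ^ 2 := by
            have := pow_lt_pow_left₀ hmd (norm_nonneg _) (n := 2) (by norm_num)
            rwa [Real.sq_sqrt (by linarith)] at this
          have : b ≤ ‖g v‖ ^ 2 +
              ‖(Submodule.orthogonalProjection K (R v) : H) - R ((LinearMap.inl ℂ X Y) z)‖ ^ 2 := by
            rw [← heq]; exact hb'
          linarith
      have hSv := hS v
      rw [hfun] at hSv
      exact hSv.unique hglb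
    rw [@inner_self_eq_norm_sq_to_K ℂ]
    rw [Complex.ext_iff]
    constructor <;> simp [hre, him, ← Complex.ofReal_pow]
  -- polarization
  have hpol : ∀ v v' : X × Y,
      S v v' + S v' v = @inner ℂ _ _ (g v') (g v) + @inner ℂ _ _ (g v) (g v') := by
    intro v v'
    have h := hdiag (v + v')
    rw [hgadd, inner_add_add_self] at h
    simp only [map_add, LinearMap.add_apply] at h
    have h1 := hdiag v
    have h2 := hdiag v'
    linear_combination h - h1 - h2
  intro w w'
  have h1 := hpol w w'
  have h2 := hpol w (Complex.I • w')
  rw [hgsmul] at h2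
  simp only [map_smul, LinearMap.smul_apply, LinearMap.map_smulₛₗ, inner_smul_left,
    inner_smul_right, smul_eq_mul, Complex.conj_I] at h2
  have hS12 : S w w' = @inner ℂ _ _ (g w') (g w) := by
    have h3 : (2 * Complex.I) * S w w' = (2 * Complex.I) * @inner ℂ _ _ (g w') (g w) := by
      linear_combination Complex.I * h1 - h2
    exact mul_left_cancel₀ (mul_ne_zero two_ne_zero Complex.I_ne_zero) h3
  show S w w' = @inner ℂ _ _ (R w') (g w)
  have hdec : R w' = g w' + (Submodule.orthogonalProjection K (R w') : H) := by
    simp [hg]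
  rw [hS12, hdec, inner_add_left,
    Submodule.inner_right_of_mem_orthogonal (Submodule.orthogonalProjection K (R w')).2 (hgmem w),
    add_zero]
end
end

section
/- If 𝐀 is a non-negative operator on X × Y, (R, H) is a square root of 𝐀, and (S, G) is a square root of its shorted operator 𝒮(𝐀), then ran S* = ran R* ∩ Y' (identifying Y' with {0} × Y' ⊆ X' × Y'). -/
open scoped ComplexOrder ComplexConjugate
open Complex

noncomputable section

lemma norm_eq_of_inner_eq {V H G : Type*} [AddCommGroup V] [Module ℂ V]
    [NormedAddCommGroup H] [InnerProductSpace ℂ H]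
    [NormedAddCommGroup G] [InnerProductSpace ℂ G]
    (A : V →ₗ[ℂ] H) (B : V →ₗ[ℂ] G)
    (hAB : ∀ v w : V, (inner ℂ (A v) (A w) : ℂ) = inner ℂ (B v) (B w)) (v : V) :
    ‖A v‖ = ‖B v‖ := by
  have h := hAB v v
  rw [inner_self_eq_norm_sq_to_K, inner_self_eq_norm_sq_to_K] at h
  have h2 : (‖A v‖ ^ 2 : ℝ) = ‖B v‖ ^ 2 := by exact_mod_cast h
  nlinarith [norm_nonneg (A v), norm_nonneg (B v)]

lemma range_adjMap_subset_s12 {V H G : Type*} [AddCommGroup V] [Module ℂ V]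
    [NormedAddCommGroup H] [InnerProductSpace ℂ H] [CompleteSpace H]
    [NormedAddCommGroup G] [InnerProductSpace ℂ G] [CompleteSpace G]
    (A : V →ₗ[ℂ] H) (B : V →ₗ[ℂ] G)
    (hAB : ∀ v w : V, (inner ℂ (A v) (A w) : ℂ) = inner ℂ (B v) (B w)) :
    Set.range (adjMap A) ⊆ Set.range (adjMap B) := by
  rintro f ⟨h, rfl⟩
  have hnorm := norm_eq_of_inner_eq A B hAB
  have hker : LinearMap.ker B ≤ LinearMap.ker A := by
    intro v hv
    rw [LinearMap.mem_ker] at hv ⊢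
    have : ‖A v‖ = 0 := by rw [hnorm v, hv, norm_zero]
    exact norm_eq_zero.mp this
  set U : LinearMap.range B →ₗ[ℂ] H :=
    ((LinearMap.ker B).liftQ A hker).comp B.quotKerEquivRange.symm.toLinearMap with hUdef
  have hU : ∀ v : V, U ⟨B v, LinearMap.mem_range_self B v⟩ = A v := by
    intro v
    have h1 : B.quotKerEquivRange.symm ⟨B v, LinearMap.mem_range_self B v⟩
        = (LinearMap.ker B).mkQ v := B.quotKerEquivRange_symm_apply_image v _
    simp [hUdef, h1]
  have hUnorm : ∀ u : LinearMap.range B, ‖U u‖ = ‖u‖ := by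
    rintro ⟨_, v, rfl⟩
    rw [hU v]
    exact (hnorm v).trans rfl
  set φ₀ : LinearMap.range B →ₗ[ℂ] ℂ := ((innerSL ℂ h) : H →ₗ[ℂ] ℂ).comp U with hφ₀def
  have hφ₀bound : ∀ u : LinearMap.range B, ‖φ₀ u‖ ≤ ‖h‖ * ‖u‖ := by
    intro u
    calc ‖φ₀ u‖ = ‖(inner ℂ h (U u) : ℂ)‖ := rfl
    _ ≤ ‖h‖ * ‖U u‖ := norm_inner_le_norm _ _
    _ = ‖h‖ * ‖u‖ := by rw [hUnorm]
  set φ : LinearMap.range B →L[ℂ] ℂ := φ₀.mkContinuous ‖h‖ hφ₀bound with hφdef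
  set N := (LinearMap.range B).topologicalClosure with hNdef
  set e₀ : LinearMap.range B →ₗ[ℂ] N :=
    Submodule.inclusion (LinearMap.range B).le_topologicalClosure with he₀def
  have he₀norm : ∀ u : LinearMap.range B, ‖e₀ u‖ = ‖u‖ := fun u => rfl
  set e : LinearMap.range B →L[ℂ] N := e₀.mkContinuous 1 (fun u => by
    rw [he₀norm, one_mul]) with hedef
  have hui : IsUniformInducing e :=
    (AddMonoidHomClass.isometry_of_norm e (fun u => he₀norm u)).isUniformInducing
  have hdense : DenseRange e := by
    refine Topology.IsInducing.subtypeVal.dense_iff.2 fun x => ?_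
    have hx : (x : G) ∈ closure ((LinearMap.range B : Submodule ℂ G) : Set G) := x.prop
    convert hx using 2
    rw [← Set.range_comp]
    ext y
    constructor
    · rintro ⟨y, rfl⟩; exact y.prop
    · intro hy; exact ⟨⟨y, hy⟩, rfl⟩
  set φe : N →L[ℂ] ℂ := φ.extend e with hφedef
  set g₀ : N := (InnerProductSpace.toDual ℂ N).symm φe with hg₀def
  refine ⟨(g₀ : G), ?_⟩
  ext v
  have h1 : (inner ℂ g₀ (e ⟨B v, LinearMap.mem_range_self B v⟩) : ℂ)
      = φ ⟨B v, LinearMap.mem_range_self B v⟩ := by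
    rw [hg₀def, InnerProductSpace.toDual_symm_apply, hφedef]
    exact ContinuousLinearMap.extend_eq φ hdense hui _
  have h2 : (inner ℂ ((g₀ : G)) (B v) : ℂ) = inner ℂ h (A v) := by
    have h3 : (inner ℂ g₀ (e ⟨B v, LinearMap.mem_range_self B v⟩) : ℂ)
        = inner ℂ ((g₀ : G)) (B v) := Submodule.coe_inner _ _ _
    rw [h3] at h1
    rw [h1]
    show φ₀ _ = _
    rw [hφ₀def]
    simp only [LinearMap.comp_apply, ContinuousLinearMap.coe_coe, innerSL_apply_apply]
    rw [hU v]
  show (inner ℂ (B v) ((g₀ : G)) : ℂ) = inner ℂ (A v) h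
  rw [← inner_conj_symm, h2, inner_conj_symm]

theorem schur_stmt12 {X Y H G : Type} [AddCommGroup X] [Module ℂ X]
    [AddCommGroup Y] [Module ℂ Y]
    [NormedAddCommGroup H] [InnerProductSpace ℂ H] [CompleteSpace H]
    [NormedAddCommGroup G] [InnerProductSpace ℂ G] [CompleteSpace G]
    (R : (X × Y) →ₗ[ℂ] H)
    (S : (X × Y) →ₗ[ℂ] ((X × Y) →ₗ⋆[ℂ] ℂ))
    (hSh : ∀ w₁ w₂, S w₁ w₂ = conj (S w₂ w₁))
    (hSchar : ∀ w : X × Y,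
      IsGLB (Set.range fun z : X =>
          ((adjMap R (R (w - (z, 0)))) (w - (z, 0))).re) ((S w w).re))
    (Q : (X × Y) →ₗ[ℂ] G) (hQ : ∀ w, S w = adjMap Q (Q w)) :
    Set.range (adjMap Q) =
      {f : (X × Y) →ₗ⋆[ℂ] ℂ |
        f ∈ Set.range (adjMap R) ∧ ∀ x : X, f (x, 0) = 0} := by
  classical
  have hre : ∀ u : X × Y, ((adjMap R (R u)) u).re = ‖R u‖ ^ 2 := by
    intro u
    have h1 : (adjMap R (R u)) u = ((‖R u‖ ^ 2 : ℝ) : ℂ) := by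
      rw [adjMap_apply, inner_self_eq_norm_sq_to_K]; norm_cast
    rw [h1, Complex.ofReal_re]
  set M₀ : Submodule ℂ H := LinearMap.range (R ∘ₗ LinearMap.inl ℂ X Y) with hM₀def
  set M : Submodule ℂ H := M₀.topologicalClosure with hMdef
  haveI hMc : CompleteSpace M := Submodule.topologicalClosure.completeSpace M₀
  set K : Submodule ℂ H := Mᗮ with hKdef
  haveI hKc : CompleteSpace K := (Submodule.isClosed_orthogonal M).completeSpace_coe
  set A : (X × Y) →ₗ[ℂ] K := (K.orthogonalProjectionOnto.toLinearMap).comp R with hAdef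
  have hRL : ∀ x : X, R (x, 0) ∈ M := fun x =>
    M₀.le_topologicalClosure ⟨x, rfl⟩
  have hMK : ∀ m ∈ M, ∀ k : K, (inner ℂ m ((k : H)) : ℂ) = 0 := by
    intro m hm k
    exact (Submodule.mem_orthogonal M (k : H)).1 k.2 m hm
  -- K-orthocomplement is M
  have hKorth : Kᗮ = M := Submodule.orthogonal_orthogonal M
  have hA : ∀ (v : X × Y) (k : K), (inner ℂ (A v) k : ℂ) = inner ℂ (R v) ((k : H)) := by
    intro v k
    rw [Submodule.coe_inner]
    have hsub : R v - ((A v : K) : H) ∈ M := by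
      have h := Submodule.sub_starProjection_mem_orthogonal (K := K) (R v)
      rwa [hKorth] at h
    have h0 := hMK _ hsub k
    rw [inner_sub_left] at h0
    exact (sub_eq_zero.mp h0).symm
  have hAkill : ∀ x : X, A (x, 0) = 0 := by
    intro x
    have hmem : R (x, 0) ∈ Kᗮ := by rw [hKorth]; exact hRL x
    rw [hAdef, LinearMap.comp_apply]
    exact Submodule.orthogonalProjectionOnto_apply_of_mem_orthogonal hmem
  -- norms of A and Q agree
  have hnormAQ : ∀ w : X × Y, ‖A w‖ = ‖Q w‖ := by
    intro w
    have hSww : (S w w).re = ‖Q w‖ ^ 2 := by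
      have h1 : S w w = ((‖Q w‖ ^ 2 : ℝ) : ℂ) := by
        rw [hQ w, adjMap_apply, inner_self_eq_norm_sq_to_K]; norm_cast
      rw [h1, Complex.ofReal_re]
    have hglb1 := hSchar w
    simp only [hre] at hglb1
    have hglb2 : IsGLB (Set.range fun z : X => ‖R (w - (z, 0))‖ ^ 2) (‖A w‖ ^ 2) := by
      constructor
      · rintro b ⟨z, rfl⟩
        have hAw : A w = A (w - (z, 0)) := by
          rw [map_sub, hAkill z, sub_zero]
        have hle : ‖A (w - (z, 0))‖ ≤ ‖R (w - (z, 0))‖ := by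
          calc ‖A (w - (z, 0))‖
              ≤ ‖K.orthogonalProjectionOnto‖ * ‖R (w - (z, 0))‖ :=
                K.orthogonalProjectionOnto.le_opNorm _
          _ ≤ 1 * ‖R (w - (z, 0))‖ := by
                have := Submodule.orthogonalProjectionOnto_norm_le K
                gcongr
          _ = ‖R (w - (z, 0))‖ := one_mul _
        rw [hAw]
        exact pow_le_pow_left₀ (norm_nonneg _) hle 2
      · intro b hb
        have hsub : R w - ((A w : K) : H) ∈ M := by
          have h := Submodule.sub_starProjection_mem_orthogonal (K := K) (R w)
          rwa [hKorth] at h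
        have hclos : R w - ((A w : K) : H) ∈ closure (M₀ : Set H) := by
          rw [← Submodule.topologicalClosure_coe]
          exact hsub
        obtain ⟨u, hmem, htend⟩ := mem_closure_iff_seq_limit.mp hclos
        choose z hz using hmem
        have hval : ∀ n, ‖R (w - (z n, 0))‖ ^ 2 = ‖R w - u n‖ ^ 2 := by
          intro n
          rw [map_sub, ← hz n]
          rfl
        have hb2 : ∀ n, b ≤ ‖R w - u n‖ ^ 2 := by
          intro n
          rw [← hval n]
          exact hb ⟨z n, rfl⟩
        have htend2 : Filter.Tendsto (fun n => ‖R w - u n‖ ^ 2)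
            Filter.atTop (nhds (‖R w - (R w - ((A w : K) : H))‖ ^ 2)) :=
          ((Filter.Tendsto.const_sub (R w) htend).norm).pow 2
        rw [sub_sub_cancel] at htend2
        exact ge_of_tendsto' htend2 hb2
    have h3 : (S w w).re = ‖A w‖ ^ 2 := hglb1.unique hglb2
    have h4 : ‖A w‖ ^ 2 = ‖Q w‖ ^ 2 := by rw [← h3, hSww]
    nlinarith [norm_nonneg (A w), norm_nonneg (Q w)]
  -- inner ℂ products of A and Q agree (polarization)
  have hAQ : ∀ v w : X × Y, (inner ℂ (A v) (A w) : ℂ) = inner ℂ (Q v) (Q w) := by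
    intro v w
    rw [inner_eq_sum_norm_sq_div_four, inner_eq_sum_norm_sq_div_four]
    have e1 : ‖A v + A w‖ = ‖Q v + Q w‖ := by
      rw [← map_add, ← map_add, hnormAQ]
    have e2 : ‖A v - A w‖ = ‖Q v - Q w‖ := by
      rw [← map_sub, ← map_sub, hnormAQ]
    have e3 : ‖A v - (RCLike.I : ℂ) • A w‖ = ‖Q v - (RCLike.I : ℂ) • Q w‖ := by
      rw [← map_smul, ← map_smul, ← map_sub, ← map_sub, hnormAQ]
    have e4 : ‖A v + (RCLike.I : ℂ) • A w‖ = ‖Q v + (RCLike.I : ℂ) • Q w‖ := by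
      rw [← map_smul, ← map_smul, ← map_add, ← map_add, hnormAQ]
    rw [e1, e2, e3, e4]
  have hrangeQA : Set.range (adjMap Q) = Set.range (adjMap A) :=
    Set.Subset.antisymm
      (range_adjMap_subset_s12 Q A (fun v w => (hAQ v w).symm))
      (range_adjMap_subset_s12 A Q hAQ)
  rw [hrangeQA]
  ext f
  constructor
  · rintro ⟨k, rfl⟩
    refine ⟨⟨(k : H), ?_⟩, ?_⟩
    · ext v
      rw [adjMap_apply, adjMap_apply]
      exact (hA v k).symm
    · intro x
      rw [adjMap_apply, hAkill x, inner_zero_left]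
  · rintro ⟨⟨h, rfl⟩, hf⟩
    have hhK : h ∈ K := by
      rw [hKdef, Submodule.mem_orthogonal]
      intro m hm
      have hm' : m ∈ LinearMap.ker (innerSL ℂ h : H →ₗ[ℂ] ℂ) := by
        have hle : M ≤ LinearMap.ker (innerSL ℂ h : H →ₗ[ℂ] ℂ) := by
          apply Submodule.topologicalClosure_minimal
          · rintro _ ⟨x, rfl⟩
            rw [LinearMap.mem_ker]
            show (inner ℂ h (R (x, 0)) : ℂ) = 0
            rw [← inner_conj_symm]
            have := hf x
            rw [adjMap_apply] at this
            rw [this, map_zero]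
          · exact ContinuousLinearMap.isClosed_ker (innerSL ℂ h)
        exact hle hm
      rw [LinearMap.mem_ker] at hm'
      rw [← inner_conj_symm]
      change (inner ℂ h m : ℂ) = 0 at hm'
      rw [hm', map_zero]
    refine ⟨⟨h, hhK⟩, ?_⟩
    ext v
    rw [adjMap_apply, adjMap_apply]
    exact hA v ⟨h, hhK⟩
end
end

section
/- (Crabtree–Haynsworth quotient formula.) Let 𝐃 be a non-negative 3×3 block operator on X × Y × Z with blocks (A, B, B_X; B~, D, B_Y; B_X~, B_Y~, D₁), and let 𝐀 = [[A, B],[B~, D]]. Then the Schur complement 𝐀/A is the upper-left corner of 𝐃/A, and (𝐃/A)/(𝐀/A) = 𝐃/𝐀. -/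
open scoped ComplexOrder ComplexConjugate
open Complex

noncomputable section

private lemma perp_of_mem_closure_range' {V E : Type*} [AddCommGroup V] [Module ℂ V]
    [NormedAddCommGroup E] [InnerProductSpace ℂ E]
    (L : V →ₗ[ℂ] E) (h : E) (hmem : h ∈ closure (Set.range L))
    (hperp : ∀ v, @inner ℂ _ _ (L v) h = 0) : h = 0 := by
  have hcl : closure (Set.range ⇑L) ⊆ {g : E | @inner ℂ _ _ g h = 0} := by
    refine closure_minimal ?_
      (isClosed_eq (Continuous.inner continuous_id continuous_const) continuous_const)
    rintro g ⟨v, rfl⟩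
    exact hperp v
  exact inner_self_eq_zero.mp (hcl hmem)

private lemma sub_mem_closure_range' {V E : Type*} [AddCommGroup V] [Module ℂ V]
    [NormedAddCommGroup E] [InnerProductSpace ℂ E] (L : V →ₗ[ℂ] E) {a b : E}
    (ha : a ∈ closure (Set.range L)) (hb : b ∈ closure (Set.range L)) :
    a - b ∈ closure (Set.range L) := by
  rw [← LinearMap.coe_range, ← Submodule.topologicalClosure_coe] at ha hb ⊢
  exact sub_mem ha hb

private lemma add_mem_closure_range' {V E : Type*} [AddCommGroup V] [Module ℂ V]
    [NormedAddCommGroup E] [InnerProductSpace ℂ E] (L : V →ₗ[ℂ] E) {a b : E}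
    (ha : a ∈ closure (Set.range L)) (hb : b ∈ closure (Set.range L)) :
    a + b ∈ closure (Set.range L) := by
  rw [← LinearMap.coe_range, ← Submodule.topologicalClosure_coe] at ha hb ⊢
  exact add_mem ha hb

theorem schur_stmt13 {X Y Z H G K : Type} [AddCommGroup X] [Module ℂ X]
    [AddCommGroup Y] [Module ℂ Y] [AddCommGroup Z] [Module ℂ Z]
    [NormedAddCommGroup H] [InnerProductSpace ℂ H] [CompleteSpace H]
    [NormedAddCommGroup G] [InnerProductSpace ℂ G] [CompleteSpace G]
    [NormedAddCommGroup K] [InnerProductSpace ℂ K] [CompleteSpace K]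
    (A : X →ₗ[ℂ] (X →ₗ⋆[ℂ] ℂ)) (B : Y →ₗ[ℂ] (X →ₗ⋆[ℂ] ℂ))
    (BX : Z →ₗ[ℂ] (X →ₗ⋆[ℂ] ℂ))
    (D : Y →ₗ[ℂ] (Y →ₗ⋆[ℂ] ℂ)) (BY : Z →ₗ[ℂ] (Y →ₗ⋆[ℂ] ℂ))
    (D₁ : Z →ₗ[ℂ] (Z →ₗ⋆[ℂ] ℂ))
    (hDh : ∀ y₁ y₂, D y₁ y₂ = conj (D y₂ y₁))
    (hD₁h : ∀ z₁ z₂, D₁ z₁ z₂ = conj (D₁ z₂ z₁))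
    -- 𝐃 is non-negative:
    (hDDnonneg : ∀ (x : X) (y : Y) (z : Z),
      0 ≤ (A x + B y + BX z) x + ((Btilde B) x + D y + BY z) y +
        ((Btilde BX) x + (Btilde BY) y + D₁ z) z)
    -- (R, H): square root of A; T_B, E the associated operators for B, B_X:
    (R : X →ₗ[ℂ] H) (hR : ∀ x, A x = adjMap R (R x))
    (TB : Y →ₗ[ℂ] H) (hTB : ∀ y, adjMap R (TB y) = B y)
    (hTBran : ∀ y, TB y ∈ closure (Set.range R))
    (E : Z →ₗ[ℂ] H) (hE : ∀ z, adjMap R (E z) = BX z)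
    (hEran : ∀ z, E z ∈ closure (Set.range R))
    -- F : the operator associated with the combined off-diagonal block (B, B_X):
    (F : (Y × Z) →ₗ[ℂ] H)
    (hF : ∀ (y : Y) (z : Z), adjMap R (F (y, z)) = B y + BX z)
    (hFran : ∀ w : Y × Z, F w ∈ closure (Set.range R))
    -- (S, G): square root of 𝐀/A = D − T_B* T_B:
    (S : Y →ₗ[ℂ] G) (hS : ∀ y, D y - adjMap TB (TB y) = adjMap S (S y))
    -- T₂ : operator associated with the off-diagonal block of 𝐃/A w.r.t. 𝐀/A:
    (T₂ : Z →ₗ[ℂ] G)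
    (hT₂ : ∀ (z : Z) (y' : Y),
      (adjMap S (T₂ z)) y' = BY z y' - @inner ℂ _ _ (F (y', 0)) (F (0, z)))
    (hT₂ran : ∀ z, T₂ z ∈ closure (Set.range S))
    -- (Q, K): square root of 𝐀 = [[A, B], [B~, D]]:
    (Q : (X × Y) →ₗ[ℂ] K)
    (hQ : ∀ (x : X) (y : Y) (x' : X) (y' : Y),
      (A x + B y) x' + ((Btilde B) x + D y) y' = @inner ℂ _ _ (Q (x', y')) (Q (x, y)))
    -- T₃ : operator associated with the off-diagonal block (B_X; B_Y) w.r.t. 𝐀: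
    (T₃ : Z →ₗ[ℂ] K)
    (hT₃ : ∀ (z : Z) (x' : X) (y' : Y),
      @inner ℂ _ _ (Q (x', y')) (T₃ z) = BX z x' + BY z y')
    (hT₃ran : ∀ z, T₃ z ∈ closure (Set.range Q)) :
    -- 𝐀/A is the left upper corner of 𝐃/A:
    (∀ (y y' : Y),
        D y y' - @inner ℂ _ _ (F (y', 0)) (F (y, 0)) =
          (D y - adjMap TB (TB y)) y') ∧
      -- the quotient formula (𝐃/A)/(𝐀/A) = 𝐃/𝐀:
      ∀ (z z' : Z),
        D₁ z z' - @inner ℂ _ _ (F (0, z')) (F (0, z)) -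
            @inner ℂ _ _ (T₂ z') (T₂ z) =
          D₁ z z' - @inner ℂ _ _ (T₃ z') (T₃ z) := by
  classical
  -- Step 1: F (y, 0) = TB y and F (0, z) = E z.
  have hF1 : ∀ y : Y, F (y, (0 : Z)) = TB y := by
    intro y
    have hmem : F (y, 0) - TB y ∈ closure (Set.range ⇑R) :=
      sub_mem_closure_range' R (hFran _) (hTBran y)
    have hz : F (y, 0) - TB y = 0 := by
      refine perp_of_mem_closure_range' R _ hmem fun x => ?_
      have h1 : (@inner ℂ _ _ (R x) (F (y, 0)) : ℂ) = B y x := by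
        have h := congrArg (fun f : X →ₗ⋆[ℂ] ℂ => f x) (hF y 0)
        simpa [adjMap] using h
      have h2 : (@inner ℂ _ _ (R x) (TB y) : ℂ) = B y x := by
        have h := congrArg (fun f : X →ₗ⋆[ℂ] ℂ => f x) (hTB y)
        simpa [adjMap] using h
      rw [inner_sub_right, h1, h2, sub_self]
    exact sub_eq_zero.mp hz
  have hF2 : ∀ z : Z, F ((0 : Y), z) = E z := by
    intro z
    have hmem : F (0, z) - E z ∈ closure (Set.range ⇑R) :=
      sub_mem_closure_range' R (hFran _) (hEran z)
    have hz : F (0, z) - E z = 0 := by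
      refine perp_of_mem_closure_range' R _ hmem fun x => ?_
      have h1 : (@inner ℂ _ _ (R x) (F (0, z)) : ℂ) = BX z x := by
        have h := congrArg (fun f : X →ₗ⋆[ℂ] ℂ => f x) (hF 0 z)
        simpa [adjMap] using h
      have h2 : (@inner ℂ _ _ (R x) (E z) : ℂ) = BX z x := by
        have h := congrArg (fun f : X →ₗ⋆[ℂ] ℂ => f x) (hE z)
        simpa [adjMap] using h
      rw [inner_sub_right, h1, h2, sub_self]
    exact sub_eq_zero.mp hz
  -- Basic inner product computations
  have fact1 : ∀ x x' : X, (@inner ℂ _ _ (R x') (R x) : ℂ) = A x x' := by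
    intro x x'; rw [hR x]; rfl
  have fact2 : ∀ (x' : X) (y : Y), (@inner ℂ _ _ (R x') (TB y) : ℂ) = B y x' := by
    intro x' y; rw [← hTB y]; rfl
  have fact3 : ∀ (x : X) (y' : Y), (@inner ℂ _ _ (TB y') (R x) : ℂ) = Btilde B x y' := by
    intro x y'
    calc (@inner ℂ _ _ (TB y') (R x) : ℂ) = conj (@inner ℂ _ _ (R x) (TB y')) :=
          (inner_conj_symm _ _).symm
      _ = conj (B y' x) := by rw [fact2]
      _ = Btilde B x y' := rfl
  have fact4 : ∀ y y' : Y,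
      (@inner ℂ _ _ (S y') (S y) : ℂ) = D y y' - @inner ℂ _ _ (TB y') (TB y) := by
    intro y y'
    have h := congrArg (fun f : Y →ₗ⋆[ℂ] ℂ => f y') (hS y)
    simp only [LinearMap.sub_apply] at h
    exact h.symm
  -- identity (i): the factorization of 𝐀 through H × G
  have iden : ∀ p q : X × Y,
      (@inner ℂ _ _ (Q q) (Q p) : ℂ) =
        @inner ℂ _ _ (R q.1 + TB q.2) (R p.1 + TB p.2) + @inner ℂ _ _ (S q.2) (S p.2) := by
    rintro ⟨x, y⟩ ⟨x', y'⟩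
    have hq := hQ x y x' y'
    simp only [LinearMap.add_apply] at hq
    rw [← hq]
    simp only [inner_add_left, inner_add_right, fact1, fact2, fact3, fact4]
    ring
  -- identity (ii)
  have iden2 : ∀ (p : X × Y) (z : Z),
      (@inner ℂ _ _ (R p.1 + TB p.2) (E z) : ℂ) + @inner ℂ _ _ (S p.2) (T₂ z) =
        @inner ℂ _ _ (Q p) (T₃ z) := by
    rintro ⟨x, y⟩ z
    have h1 : (@inner ℂ _ _ (R x) (E z) : ℂ) = BX z x := by rw [← hE z]; rfl
    have h2 : (@inner ℂ _ _ (S y) (T₂ z) : ℂ) = BY z y - @inner ℂ _ _ (TB y) (E z) := by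
      have h := hT₂ z y
      rw [hF1, hF2] at h
      exact h
    rw [hT₃ z x y]
    simp only [inner_add_left, h1, h2]
    ring
  -- norm inequalities
  have hle1 : ∀ p : X × Y, ‖R p.1 + TB p.2‖ ≤ ‖Q p‖ := by
    intro p
    have h := iden p p
    rw [inner_self_eq_norm_sq_to_K, inner_self_eq_norm_sq_to_K, inner_self_eq_norm_sq_to_K] at h
    have h' : ‖Q p‖ ^ 2 = ‖R p.1 + TB p.2‖ ^ 2 + ‖S p.2‖ ^ 2 := by exact_mod_cast h
    nlinarith [norm_nonneg (R p.1 + TB p.2), norm_nonneg (Q p), sq_nonneg ‖S p.2‖]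
  have hle2 : ∀ p : X × Y, ‖S p.2‖ ≤ ‖Q p‖ := by
    intro p
    have h := iden p p
    rw [inner_self_eq_norm_sq_to_K, inner_self_eq_norm_sq_to_K, inner_self_eq_norm_sq_to_K] at h
    have h' : ‖Q p‖ ^ 2 = ‖R p.1 + TB p.2‖ ^ 2 + ‖S p.2‖ ^ 2 := by exact_mod_cast h
    nlinarith [norm_nonneg (S p.2), norm_nonneg (Q p), sq_nonneg ‖R p.1 + TB p.2‖]
  -- the key approximation lemma
  have main : ∀ z : Z, ∃ w : ℕ → X × Y,
      Filter.Tendsto (fun n => Q (w n)) Filter.atTop (nhds (T₃ z)) ∧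
      Filter.Tendsto (fun n => R (w n).1 + TB (w n).2) Filter.atTop (nhds (E z)) ∧
      Filter.Tendsto (fun n => S (w n).2) Filter.atTop (nhds (T₂ z)) := by
    intro z
    obtain ⟨u, hu_mem, hu_lim⟩ := mem_closure_iff_seq_limit.mp (hT₃ran z)
    choose w hw using hu_mem
    have hQw : Filter.Tendsto (fun n => Q (w n)) Filter.atTop (nhds (T₃ z)) := by
      have : (fun n => Q (w n)) = u := funext hw
      rw [this]; exact hu_lim
    have hQc : CauchySeq (fun n => Q (w n)) := hQw.cauchySeq
    have hsub1 : ∀ m n : ℕ, (R (w m).1 + TB (w m).2) - (R (w n).1 + TB (w n).2)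
        = R (w m - w n).1 + TB (w m - w n).2 := by
      intro m n
      simp only [Prod.fst_sub, Prod.snd_sub, map_sub]
      abel
    have hsub2 : ∀ m n : ℕ, S (w m).2 - S (w n).2 = S (w m - w n).2 := by
      intro m n
      simp only [Prod.snd_sub, map_sub]
    have hU1c : CauchySeq (fun n => R (w n).1 + TB (w n).2) := by
      rw [Metric.cauchySeq_iff] at hQc ⊢
      intro ε hε
      obtain ⟨N, hN⟩ := hQc ε hε
      refine ⟨N, fun m hm n hn => ?_⟩
      calc dist (R (w m).1 + TB (w m).2) (R (w n).1 + TB (w n).2)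
          = ‖(R (w m).1 + TB (w m).2) - (R (w n).1 + TB (w n).2)‖ := dist_eq_norm _ _
        _ = ‖R (w m - w n).1 + TB (w m - w n).2‖ := by rw [hsub1]
        _ ≤ ‖Q (w m - w n)‖ := hle1 _
        _ = ‖Q (w m) - Q (w n)‖ := by rw [map_sub]
        _ = dist (Q (w m)) (Q (w n)) := (dist_eq_norm _ _).symm
        _ < ε := hN m hm n hn
    have hU2c : CauchySeq (fun n => S (w n).2) := by
      rw [Metric.cauchySeq_iff] at hQc ⊢
      intro ε hε
      obtain ⟨N, hN⟩ := hQc ε hε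
      refine ⟨N, fun m hm n hn => ?_⟩
      calc dist (S (w m).2) (S (w n).2)
          = ‖S (w m).2 - S (w n).2‖ := dist_eq_norm _ _
        _ = ‖S (w m - w n).2‖ := by rw [hsub2]
        _ ≤ ‖Q (w m - w n)‖ := hle2 _
        _ = ‖Q (w m) - Q (w n)‖ := by rw [map_sub]
        _ = dist (Q (w m)) (Q (w n)) := (dist_eq_norm _ _).symm
        _ < ε := hN m hm n hn
    obtain ⟨L1, hL1⟩ := cauchySeq_tendsto_of_complete hU1c
    obtain ⟨L2, hL2⟩ := cauchySeq_tendsto_of_complete hU2c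
    have hcouple : ∀ p : X × Y,
        (@inner ℂ _ _ (R p.1 + TB p.2) L1 : ℂ) + @inner ℂ _ _ (S p.2) L2 =
          @inner ℂ _ _ (R p.1 + TB p.2) (E z) + @inner ℂ _ _ (S p.2) (T₂ z) := by
      intro p
      have t1 : Filter.Tendsto
          (fun n => (@inner ℂ _ _ (R p.1 + TB p.2) (R (w n).1 + TB (w n).2) : ℂ)
            + @inner ℂ _ _ (S p.2) (S (w n).2)) Filter.atTop
          (nhds (@inner ℂ _ _ (R p.1 + TB p.2) L1 + @inner ℂ _ _ (S p.2) L2)) :=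
        (Filter.Tendsto.inner tendsto_const_nhds hL1).add
          (Filter.Tendsto.inner tendsto_const_nhds hL2)
      have t2 : Filter.Tendsto (fun n => (@inner ℂ _ _ (Q p) (Q (w n)) : ℂ)) Filter.atTop
          (nhds (@inner ℂ _ _ (Q p) (T₃ z))) :=
        Filter.Tendsto.inner tendsto_const_nhds hQw
      have heq : (fun n => (@inner ℂ _ _ (R p.1 + TB p.2) (R (w n).1 + TB (w n).2) : ℂ)
            + @inner ℂ _ _ (S p.2) (S (w n).2))
          = fun n => (@inner ℂ _ _ (Q p) (Q (w n)) : ℂ) := by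
        funext n
        exact (iden (w n) p).symm
      rw [heq] at t1
      have hu := tendsto_nhds_unique t1 t2
      rw [hu, ← iden2 p z]
    have hL1E : L1 = E z := by
      have hL1mem : L1 ∈ closure (Set.range ⇑R) := by
        refine isClosed_closure.mem_of_tendsto hL1 ?_
        filter_upwards with n
        exact add_mem_closure_range' R (subset_closure ⟨_, rfl⟩) (hTBran _)
      have hd : L1 - E z = 0 := by
        refine perp_of_mem_closure_range' R _
          (sub_mem_closure_range' R hL1mem (hEran z)) fun x => ?_
        have h := hcouple (x, 0)
        simp only [map_zero, add_zero, inner_zero_left] at h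
        rw [inner_sub_right, h, sub_self]
      exact sub_eq_zero.mp hd
    have hL2T : L2 = T₂ z := by
      have hL2mem : L2 ∈ closure (Set.range ⇑S) := by
        refine isClosed_closure.mem_of_tendsto hL2 ?_
        filter_upwards with n
        exact subset_closure ⟨_, rfl⟩
      have hd : L2 - T₂ z = 0 := by
        refine perp_of_mem_closure_range' S _
          (sub_mem_closure_range' S hL2mem (hT₂ran z)) fun y => ?_
        have h := hcouple (0, y)
        simp only [map_zero, zero_add] at h
        rw [hL1E] at h
        rw [inner_sub_right]
        linear_combination h
      exact sub_eq_zero.mp hd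
    exact ⟨w, hQw, hL1E ▸ hL1, hL2T ▸ hL2⟩
  constructor
  · intro y y'
    rw [hF1, hF1]
    simp [adjMap, LinearMap.sub_apply]
  · intro z z'
    obtain ⟨w, hQw, hU1w, hU2w⟩ := main z
    obtain ⟨w', hQw', hU1w', hU2w'⟩ := main z'
    have t1 : Filter.Tendsto (fun n => (@inner ℂ _ _ (Q (w' n)) (Q (w n)) : ℂ))
        Filter.atTop (nhds (@inner ℂ _ _ (T₃ z') (T₃ z))) :=
      Filter.Tendsto.inner hQw' hQw
    have t2 : Filter.Tendsto
        (fun n => (@inner ℂ _ _ (R (w' n).1 + TB (w' n).2) (R (w n).1 + TB (w n).2) : ℂ)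
          + @inner ℂ _ _ (S (w' n).2) (S (w n).2)) Filter.atTop
        (nhds (@inner ℂ _ _ (E z') (E z) + @inner ℂ _ _ (T₂ z') (T₂ z))) :=
      (Filter.Tendsto.inner hU1w' hU1w).add (Filter.Tendsto.inner hU2w' hU2w)
    have heq : (fun n => (@inner ℂ _ _ (Q (w' n)) (Q (w n)) : ℂ))
        = fun n => (@inner ℂ _ _ (R (w' n).1 + TB (w' n).2) (R (w n).1 + TB (w n).2) : ℂ)
          + @inner ℂ _ _ (S (w' n).2) (S (w n).2) := by
      funext n
      exact iden (w n) (w' n)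
    rw [heq] at t1
    have key := tendsto_nhds_unique t1 t2
    rw [hF2, hF2, key]
    ring
end
end

section
/- A Hermitian block operator 𝐀 = [[A, B], [B~, D]] on X × Y is non-negative if and only if (i) A and D are non-negative, and (ii) for any square roots (R_A, H_A) of A and (R_D, H_D) of D there exists a contraction K : H_D → H_A with B = R_A* K R_D and ran K contained in the closure of ran R_A. -/
open scoped ComplexOrder ComplexConjugate
open Complex

noncomputable section

open scoped InnerProductSpace

lemma schur_aux {Y H W : Type*} [AddCommGroup Y] [Module ℂ Y]
    [NormedAddCommGroup H] [InnerProductSpace ℂ H] [CompleteSpace H]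
    [NormedAddCommGroup W] [NormedSpace ℂ W] [CompleteSpace W]
    (R : Y →ₗ[ℂ] H) (g : Y →ₗ[ℂ] W) (C : ℝ) (hC : 0 ≤ C)
    (hb : ∀ y, ‖g y‖ ≤ C * ‖R y‖) :
    ∃ G : H →L[ℂ] W, ‖G‖ ≤ C ∧ (∀ y, G (R y) = g y) ∧
      Set.range G ⊆ closure (Set.range g) ∧
      ∀ h ∈ (LinearMap.range R)ᗮ, G h = 0 := by
  set K : Submodule ℂ H := LinearMap.range R with hKdef
  set S : Submodule ℂ H := K.topologicalClosure with hSdef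
  haveI : CompleteSpace S := K.isClosed_topologicalClosure.completeSpace_coe
  have hker : LinearMap.ker R ≤ LinearMap.ker g := by
    intro y hy
    rw [LinearMap.mem_ker] at hy ⊢
    have h1 := hb y
    rw [hy, norm_zero, mul_zero] at h1
    exact norm_le_zero_iff.mp h1
  let ℓ : K →ₗ[ℂ] W := (Submodule.liftQ (LinearMap.ker R) g hker).comp
      R.quotKerEquivRange.symm.toLinearMap
  have hℓ : ∀ (y : Y), ℓ ⟨R y, LinearMap.mem_range_self R y⟩ = g y := by
    intro y
    have h1 : R.quotKerEquivRange (Submodule.Quotient.mk y)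
        = ⟨R y, LinearMap.mem_range_self R y⟩ :=
      Subtype.ext (R.quotKerEquivRange_apply_mk y)
    have h2 : R.quotKerEquivRange.symm ⟨R y, LinearMap.mem_range_self R y⟩
        = Submodule.Quotient.mk y := by
      rw [LinearEquiv.symm_apply_eq, h1]
    simp only [ℓ, LinearMap.comp_apply, LinearEquiv.coe_toLinearMap, h2,
      Submodule.liftQ_apply]
  have hℓb : ∀ v : K, ‖ℓ v‖ ≤ C * ‖v‖ := by
    rintro ⟨v, hv⟩
    obtain ⟨y, rfl⟩ := hv
    rw [hℓ y]
    simpa using hb y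
  let f : K →L[ℂ] W := ℓ.mkContinuous C hℓb
  have hfval : ∀ y, f ⟨R y, LinearMap.mem_range_self R y⟩ = g y := hℓ
  have hf : ‖f‖ ≤ C := LinearMap.mkContinuous_norm_le ℓ hC hℓb
  have hle : K ≤ S := K.le_topologicalClosure
  let e : K →L[ℂ] S := ⟨Submodule.inclusion hle, continuous_induced_rng.2 continuous_subtype_val⟩
  have he_iso : Isometry e := Isometry.of_dist_eq fun a b => rfl
  have hui : IsUniformInducing e := he_iso.isUniformInducing
  have hdense : DenseRange e := by
    have : Dense (Set.range e) := by
      refine Topology.IsInducing.subtypeVal.dense_iff.2 fun x => ?_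
      have hx : (x : H) ∈ closure (K : Set H) := x.2
      refine closure_mono ?_ hx
      intro v hv
      exact ⟨e ⟨v, hv⟩, ⟨⟨v, hv⟩, rfl⟩, rfl⟩
    exact this
  let G' : S →L[ℂ] W := f.extend e
  have hG'norm : ‖G'‖ ≤ C := by
    have h1 : ∀ x : K, ‖x‖ ≤ ((1 : NNReal) : ℝ) * ‖e x‖ := fun x => by
      simp only [NNReal.coe_one, one_mul]; rfl
    have := f.opNorm_extend_le hdense h1
    calc ‖G'‖ ≤ ((1 : NNReal) : ℝ) * ‖f‖ := this
      _ = ‖f‖ := by simp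
      _ ≤ C := hf
  have hG'val : ∀ y : Y, G' ⟨R y, hle (LinearMap.mem_range_self R y)⟩ = g y := by
    intro y
    have : (⟨R y, hle (LinearMap.mem_range_self R y)⟩ : S)
        = e ⟨R y, LinearMap.mem_range_self R y⟩ := rfl
    rw [this, ContinuousLinearMap.extend_eq f hdense hui]
    exact hfval y
  have hG'range : ∀ z : S, G' z ∈ closure (Set.range g) := by
    intro z
    refine hdense.induction_on z (isClosed_closure.preimage G'.continuous) ?_
    rintro ⟨v, hv⟩
    obtain ⟨y, rfl⟩ := hv
    rw [ContinuousLinearMap.extend_eq f hdense hui]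
    exact subset_closure ⟨y, (hfval y).symm⟩
  let P : H →L[ℂ] S := S.orthogonalProjectionOnto
  refine ⟨G'.comp P, ?_, ?_, ?_, ?_⟩
  · calc ‖G'.comp P‖ ≤ ‖G'‖ * ‖P‖ := ContinuousLinearMap.opNorm_comp_le _ _
      _ ≤ C * 1 := mul_le_mul hG'norm (Submodule.orthogonalProjectionOnto_norm_le S) (norm_nonneg P) hC
      _ = C := mul_one C
  · intro y
    have hmem : R y ∈ S := hle (LinearMap.mem_range_self R y)
    have : P (R y) = ⟨R y, hmem⟩ := by
      have := Submodule.orthogonalProjectionOnto_mem_subspace_eq_self (K := S) ⟨R y, hmem⟩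
      simpa [P] using this
    simp only [ContinuousLinearMap.comp_apply, this]
    exact hG'val y
  · rintro w ⟨h, rfl⟩
    exact hG'range (P h)
  · intro h hh
    have hSo : h ∈ Sᗮ := by
      rw [hSdef, ← Submodule.orthogonal_orthogonal_eq_closure,
        Submodule.triorthogonal_eq_orthogonal]
      exact hh
    have : P h = 0 := Submodule.orthogonalProjectionOnto_apply_of_mem_orthogonal (K := S) hSo
    simp [ContinuousLinearMap.comp_apply, this]


theorem schur_stmt14 {X Y HA HD : Type} [AddCommGroup X] [Module ℂ X]
    [AddCommGroup Y] [Module ℂ Y]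
    [NormedAddCommGroup HA] [InnerProductSpace ℂ HA] [CompleteSpace HA]
    [NormedAddCommGroup HD] [InnerProductSpace ℂ HD] [CompleteSpace HD]
    (A : X →ₗ[ℂ] (X →ₗ⋆[ℂ] ℂ)) (B : Y →ₗ[ℂ] (X →ₗ⋆[ℂ] ℂ))
    (D : Y →ₗ[ℂ] (Y →ₗ⋆[ℂ] ℂ))
    (RA : X →ₗ[ℂ] HA) (RD : Y →ₗ[ℂ] HD)
    (hRA : ∀ x, A x = adjMap RA (RA x)) (hRD : ∀ y, D y = adjMap RD (RD y)) :
    (∀ (x : X) (y : Y), 0 ≤ (A x + B y) x + ((Btilde B) x + D y) y) ↔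
      ((∀ x, 0 ≤ A x x) ∧ (∀ y, 0 ≤ D y y) ∧
        ∃ K : HD →L[ℂ] HA, ‖K‖ ≤ 1 ∧ (∀ y, B y = adjMap RA (K (RD y))) ∧
          Set.range K ⊆ closure (Set.range RA)) := by
  have hAdiag : ∀ x : X, A x x = ((‖RA x‖^2 : ℝ) : ℂ) := by
    intro x
    rw [hRA]
    show @inner ℂ _ _ (RA x) (RA x) = _
    rw [inner_self_eq_norm_sq_to_K]
    norm_cast
  have hDdiag : ∀ y : Y, D y y = ((‖RD y‖^2 : ℝ) : ℂ) := by
    intro y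
    rw [hRD]
    show @inner ℂ _ _ (RD y) (RD y) = _
    rw [inner_self_eq_norm_sq_to_K]
    norm_cast
  have hexpr : ∀ x y, (A x + B y) x + ((Btilde B) x + D y) y
      = ((‖RA x‖^2 : ℝ) : ℂ) + B y x + conj (B y x) + ((‖RD y‖^2 : ℝ) : ℂ) := by
    intro x y
    have hBt : (Btilde B) x y = conj (B y x) := rfl
    simp only [LinearMap.add_apply, hAdiag, hDdiag, hBt]
    ring
  constructor
  · intro hpos
    have hre : ∀ x y, 0 ≤ ‖RA x‖^2 + 2*(B y x).re + ‖RD y‖^2 := by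
      intro x y
      have h0 := hpos x y
      rw [hexpr] at h0
      have h1 := (Complex.le_def.mp h0).1
      simp only [Complex.zero_re, Complex.add_re, Complex.ofReal_re, Complex.conj_re] at h1
      linarith
    have habs : ∀ x y, ‖B y x‖ ≤ ‖RA x‖ * ‖RD y‖ := by
      intro x y
      rcases eq_or_ne (B y x) 0 with h0 | h0
      · rw [h0]
        simp only [norm_zero]
        positivity
      have hquad : ∀ t : ℝ, 0 ≤ ((‖B y x‖)^2 * ‖RA x‖^2) * (t*t)
          + (-(2*(‖B y x‖)^2)) * t + ‖RD y‖^2 := by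
        intro t
        have h1 := hre ((-(t:ℂ) * (B y x)) • x) y
        have hRAx : ‖RA ((-(t:ℂ) * (B y x)) • x)‖ = (|t| * ‖B y x‖) * ‖RA x‖ := by
          rw [map_smul, norm_smul]
          simp [map_mul]
        have hBx : B y ((-(t:ℂ) * (B y x)) • x)
            = -(t:ℂ) * (((‖B y x‖)^2 : ℝ) : ℂ) := by
          rw [LinearMap.map_smulₛₗ]
          simp only [smul_eq_mul, map_mul, map_neg, Complex.conj_ofReal]
          rw [mul_assoc, Complex.conj_mul']
          push_cast
          ring
        rw [hRAx, hBx] at h1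
        have hre1 : ((-(t:ℂ) * (((‖B y x‖)^2 : ℝ) : ℂ)).re)
            = -t * (‖B y x‖)^2 := by
          have hh : (-(t:ℂ)) * (((‖B y x‖)^2 : ℝ) : ℂ)
              = (((-t) * (‖B y x‖)^2 : ℝ) : ℂ) := by
            push_cast
            ring
          rw [hh, Complex.ofReal_re]
        rw [hre1] at h1
        have hsqt : (|t| * ‖B y x‖ * ‖RA x‖)^2
            = ((‖B y x‖)^2 * ‖RA x‖^2) * (t*t) := by
          rw [mul_pow, mul_pow, _root_.sq_abs]
          ring
        rw [hsqt] at h1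
        linarith
      have hd := discrim_le_zero hquad
      rw [discrim] at hd
      have hcpos : 0 < ‖B y x‖ := norm_pos_iff.mpr h0
      have hsq : (‖B y x‖)^2 ≤ (‖RA x‖ * ‖RD y‖)^2 := by nlinarith
      exact le_of_pow_le_pow_left₀ two_ne_zero (by positivity) hsq
    set S : Submodule ℂ HA := (LinearMap.range RA).topologicalClosure with hSdef
    haveI : CompleteSpace S := (LinearMap.range RA).isClosed_topologicalClosure.completeSpace_coe
    have huniq : ∀ v w : HA, v ∈ S → w ∈ S →
        (∀ x, ⟪v, RA x⟫_ℂ = ⟪w, RA x⟫_ℂ) → v = w := by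
      intro v w hv hw hvw
      have hcl : closure ((LinearMap.range RA : Submodule ℂ HA) : Set HA)
          ⊆ {u | ⟪v - w, u⟫_ℂ = 0} := by
        apply closure_minimal
        · rintro _ ⟨x, rfl⟩
          simp only [Set.mem_setOf_eq, inner_sub_left, hvw x, sub_self]
        · exact isClosed_eq (Continuous.inner continuous_const continuous_id) continuous_const
      have hvwS : v - w ∈ S := S.sub_mem hv hw
      have h2 : ⟪v - w, v - w⟫_ℂ = 0 := hcl hvwS
      rw [inner_self_eq_zero] at h2
      exact sub_eq_zero.mp h2
    have hexist : ∀ y : Y, ∃ v : HA, v ∈ S ∧ (∀ x, ⟪v, RA x⟫_ℂ = conj (B y x))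
        ∧ ‖v‖ ≤ ‖RD y‖ := by
      intro y
      let gB : X →ₗ[ℂ] ℂ :=
        { toFun := fun x => conj (B y x)
          map_add' := fun x₁ x₂ => by simp
          map_smul' := fun s xx => by
            show conj (B y (s • xx)) = (RingHom.id ℂ) s • conj (B y xx)
            rw [LinearMap.map_smulₛₗ]
            simp [mul_comm] }
      have hgb : ∀ x, ‖gB x‖ ≤ ‖RD y‖ * ‖RA x‖ := by
        intro x
        have h1 := habs x y
        simp only [gB, LinearMap.coe_mk, AddHom.coe_mk, Complex.norm_conj]
        linarith [mul_comm (‖RA x‖) (‖RD y‖) ▸ h1]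
      obtain ⟨G, hGn, hGv, -, hG0⟩ := schur_aux RA gB (‖RD y‖) (norm_nonneg _) hgb
      refine ⟨(InnerProductSpace.toDual ℂ HA).symm G, ?_, ?_, ?_⟩
      · rw [hSdef, ← Submodule.orthogonal_orthogonal_eq_closure, Submodule.mem_orthogonal]
        intro u hu
        have h1 : G u = 0 := hG0 u hu
        rw [← inner_conj_symm, InnerProductSpace.toDual_symm_apply, h1, map_zero]
      · intro x
        rw [InnerProductSpace.toDual_symm_apply]
        exact hGv x
      · calc ‖(InnerProductSpace.toDual ℂ HA).symm G‖ = ‖G‖ :=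
              LinearIsometryEquiv.norm_map _ G
          _ ≤ ‖RD y‖ := hGn
    choose kvec hkS hkinner hknorm using hexist
    have kadd : ∀ y₁ y₂, kvec (y₁ + y₂) = kvec y₁ + kvec y₂ := by
      intro y₁ y₂
      refine huniq _ _ (hkS _) (S.add_mem (hkS y₁) (hkS y₂)) fun x => ?_
      rw [inner_add_left, hkinner, hkinner, hkinner, map_add]
      simp only [LinearMap.add_apply, map_add]
    have ksmul : ∀ (s : ℂ) (y : Y), kvec (s • y) = s • kvec y := by
      intro s y
      refine huniq _ _ (hkS _) (S.smul_mem s (hkS y)) fun x => ?_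
      rw [inner_smul_left, hkinner, hkinner, map_smul]
      simp only [LinearMap.smul_apply, smul_eq_mul, map_mul]
    let kmap : Y →ₗ[ℂ] HA :=
      { toFun := kvec
        map_add' := kadd
        map_smul' := fun s y => by rw [RingHom.id_apply]; exact ksmul s y }
    have hkb : ∀ y, ‖kmap y‖ ≤ 1 * ‖RD y‖ := fun y => by
      rw [one_mul]; exact hknorm y
    obtain ⟨K, hKn, hKv, hKr, -⟩ := schur_aux RD kmap 1 zero_le_one hkb
    refine ⟨?_, ?_, K, hKn, ?_, ?_⟩
    · intro x
      rw [hAdiag x]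
      exact Complex.zero_le_real.mpr (sq_nonneg _)
    · intro y
      rw [hDdiag y]
      exact Complex.zero_le_real.mpr (sq_nonneg _)
    · intro y
      ext x
      show B y x = @inner ℂ _ _ (RA x) (K (RD y))
      rw [hKv y]
      show B y x = ⟪RA x, kvec y⟫_ℂ
      rw [← inner_conj_symm, hkinner y x, Complex.conj_conj]
    · refine subset_trans hKr ?_
      have h1 : Set.range kmap ⊆ (S : Set HA) := by
        rintro _ ⟨y, rfl⟩
        exact hkS y
      have h2 : closure (Set.range kmap) ⊆ (S : Set HA) :=
        closure_minimal h1 (LinearMap.range RA).isClosed_topologicalClosure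
      have h3 : (S : Set HA) = closure (Set.range RA) := by
        rw [hSdef, Submodule.topologicalClosure_coe, LinearMap.coe_range]
      rw [← h3]
      exact h2
  · rintro ⟨-, -, K, hKn, hKB, -⟩ x y
    rw [hexpr]
    have hBv : B y x = ⟪RA x, K (RD y)⟫_ℂ := by rw [hKB y]; rfl
    have hnb : ‖K (RD y)‖ ≤ ‖RD y‖ := by
      calc ‖K (RD y)‖ ≤ ‖K‖ * ‖RD y‖ := K.le_opNorm _
        _ ≤ 1 * ‖RD y‖ := by
          have := norm_nonneg (RD y)
          nlinarith
        _ = ‖RD y‖ := one_mul _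
    have hz : ((‖RA x‖^2 : ℝ) : ℂ) + B y x + conj (B y x) + ((‖RD y‖^2 : ℝ) : ℂ)
        = ((‖RA x + K (RD y)‖^2 - ‖K (RD y)‖^2 + ‖RD y‖^2 : ℝ) : ℂ) := by
      rw [hBv]
      have e1 : ((‖RA x + K (RD y)‖^2 : ℝ) : ℂ)
          = @inner ℂ _ _ (RA x + K (RD y)) (RA x + K (RD y)) := by
        rw [inner_self_eq_norm_sq_to_K]; norm_cast
      have e2 : ((‖K (RD y)‖^2 : ℝ) : ℂ) = @inner ℂ _ _ (K (RD y)) (K (RD y)) := by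
        rw [inner_self_eq_norm_sq_to_K]; norm_cast
      have e3 : ((‖RA x‖^2 : ℝ) : ℂ) = @inner ℂ _ _ (RA x) (RA x) := by
        rw [inner_self_eq_norm_sq_to_K]; norm_cast
      have e4 : ((‖RD y‖^2 : ℝ) : ℂ) = @inner ℂ _ _ (RD y) (RD y) := by
        rw [inner_self_eq_norm_sq_to_K]; norm_cast
      have esplit : ((‖RA x + K (RD y)‖^2 - ‖K (RD y)‖^2 + ‖RD y‖^2 : ℝ) : ℂ)
          = ((‖RA x + K (RD y)‖^2 : ℝ) : ℂ) - ((‖K (RD y)‖^2 : ℝ) : ℂ)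
            + ((‖RD y‖^2 : ℝ) : ℂ) := by
        push_cast
        ring
      rw [esplit, e1, e2, e3, e4, inner_conj_symm]
      simp only [inner_add_left, inner_add_right]
      ring
    rw [hz]
    refine Complex.zero_le_real.mpr ?_
    nlinarith [norm_nonneg (RA x + K (RD y)), norm_nonneg (K (RD y)), norm_nonneg (RD y),
      sq_nonneg (‖RA x + K (RD y)‖)]
end
end

section
/- (Albert's theorem for operators on linear spaces.) A Hermitian block operator 𝐀 = [[A, B], [B~, D]] on X × Y is non-negative if and only if 𝐀 is of positive type (i.e., (A, B) is a positive pair) and the generalized Schur complement σ(𝐀) = D − ω(A, B) is non-negative. -/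
open scoped ComplexOrder ComplexConjugate
open Complex

noncomputable section

set_option maxHeartbeats 1000000 in
theorem schur_stmt15 {X Y H : Type} [AddCommGroup X] [Module ℂ X]
    [AddCommGroup Y] [Module ℂ Y]
    [NormedAddCommGroup H] [InnerProductSpace ℂ H] [CompleteSpace H]
    (A : X →ₗ[ℂ] (X →ₗ⋆[ℂ] ℂ)) (B : Y →ₗ[ℂ] (X →ₗ⋆[ℂ] ℂ))
    (D : Y →ₗ[ℂ] (Y →ₗ⋆[ℂ] ℂ))
    (hDh : ∀ y₁ y₂, D y₁ y₂ = conj (D y₂ y₁))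
    (R : X →ₗ[ℂ] H) (hR : ∀ x, A x = adjMap R (R x)) :
    (∀ (x : X) (y : Y), 0 ≤ (A x + B y) x + ((Btilde B) x + D y) y) ↔
      ∃ T : Y →ₗ[ℂ] H, (∀ y, adjMap R (T y) = B y) ∧
        (∀ y, T y ∈ closure (Set.range R)) ∧
        ∀ y, 0 ≤ (D y - adjMap T (T y)) y := by
  classical
  have hA : ∀ x₁ x₂ : X, A x₁ x₂ = (inner ℂ (R x₂) (R x₁) : ℂ) := fun x₁ x₂ => by
    rw [hR]; rfl
  constructor
  · intro hpos
    set K : Submodule ℂ H := (LinearMap.range R).topologicalClosure with hKdef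
    have hKclosed : IsClosed (K : Set H) := Submodule.isClosed_topologicalClosure _
    haveI : CompleteSpace K := hKclosed.completeSpace_coe
    have hKcoe : (K : Set H) = closure (Set.range R) := by
      rw [hKdef, Submodule.topologicalClosure_coe, LinearMap.coe_range]
    have hRK : ∀ x : X, R x ∈ K := fun x =>
      Submodule.le_topologicalClosure _ (LinearMap.mem_range_self R x)
    -- real-form positivity
    have hq : ∀ (x : X) (y : Y),
        0 ≤ ‖R x‖ ^ 2 + 2 * (B y x).re + (D y y).re := by
      intro x y
      have h := hpos x y
      rw [Complex.le_def] at h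
      have hre := h.1
      simp only [LinearMap.add_apply, Complex.add_re, Complex.zero_re] at hre
      have hAxx : (A x x).re = ‖R x‖ ^ 2 := by
        rw [hA, inner_self_eq_norm_sq_to_K]
        norm_cast
      have hBt : ((Btilde B) x y).re = (B y x).re := by
        simp [Btilde]
      nlinarith [hre, hAxx, hBt]
    have him : ∀ y : Y, (D y y).im = 0 := by
      intro y
      have h := hpos 0 y
      rw [Complex.le_def] at h
      have := h.2
      simpa using this.symm
    have hd0 : ∀ y : Y, 0 ≤ (D y y).re := by
      intro y
      have := hq 0 y
      simpa using this
    -- the fundamental bound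
    have hbound : ∀ (y : Y) (x : X), ‖B y x‖ ^ 2 ≤ (D y y).re * ‖R x‖ ^ 2 := by
      intro y x
      by_cases hb : B y x = 0
      · simp only [hb, norm_zero]
        have := sq_nonneg ‖R x‖
        nlinarith [hd0 y, sq_nonneg ‖R x‖]
      · have hbn : (0:ℝ) < ‖B y x‖ := norm_pos_iff.mpr hb
        have key : ∀ s : ℝ, 0 ≤ ‖R x‖ ^ 2 * (s * s) + (-(2 * ‖B y x‖)) * s + (D y y).re := by
          intro s
          set b : ℂ := B y x with hbdef
          set c : ℂ := -(s : ℂ) * (b / ‖b‖) with hcdef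
          have hb' : ((‖b‖ : ℝ) : ℂ) ≠ 0 := by
            exact_mod_cast (ne_of_gt hbn)
          have hBc : B y (c • x) = conj c * b := by
            rw [LinearMap.map_smulₛₗ]
            rfl
          have hconjc : conj c = -(s : ℂ) * (conj b / ‖b‖) := by
            rw [hcdef]
            simp [map_mul, map_div₀, Complex.conj_ofReal]
          have h2 : conj b * b = ((‖b‖ ^ 2 : ℝ) : ℂ) := by
            rw [mul_comm, Complex.mul_conj, Complex.normSq_eq_norm_sq]
          have hcb : conj c * b = ((-(s * ‖b‖) : ℝ) : ℂ) := by
            calc conj c * b = -(s:ℂ) * ((conj b * b) / ‖b‖) := by rw [hconjc]; ring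
              _ = -(s:ℂ) * (((‖b‖ ^ 2 : ℝ) : ℂ) / ((‖b‖ : ℝ) : ℂ)) := by rw [h2]
              _ = ((-(s * ‖b‖) : ℝ) : ℂ) := by
                  have hdiv : (((‖b‖ ^ 2 : ℝ) : ℂ)) / ((‖b‖ : ℝ) : ℂ) = ((‖b‖ : ℝ) : ℂ) := by
                    rw [div_eq_iff hb']
                    push_cast
                    ring
                  rw [hdiv]
                  push_cast
                  ring
          have hcnorm : ‖c‖ = |s| := by
            rw [hcdef, norm_mul, norm_neg, norm_div]
            rw [Complex.norm_real, Complex.norm_real, Real.norm_eq_abs, Real.norm_eq_abs,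
              _root_.abs_of_nonneg (norm_nonneg b), div_self (ne_of_gt hbn), mul_one]
          have hRc : ‖R (c • x)‖ ^ 2 = ‖R x‖ ^ 2 * (s * s) := by
            rw [map_smul, norm_smul, hcnorm, mul_pow, _root_.sq_abs]
            ring
          have hBre : (B y (c • x)).re = -(s * ‖b‖) := by
            rw [hBc, hcb, Complex.ofReal_re]
          have h1 := hq (c • x) y
          rw [hRc, hBre] at h1
          nlinarith [h1]
        have hdis := discrim_le_zero key
        rw [discrim] at hdis
        nlinarith [hdis]
    -- existence of representers
    have hex : ∀ y : Y, ∃ t : H, t ∈ K ∧ ∀ x : X, (inner ℂ (R x) t : ℂ) = B y x := by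
      intro y
      set d : ℝ := (D y y).re with hddef
      -- the linear functional x ↦ conj (B y x)
      set φ₀ : X →ₗ[ℂ] ℂ :=
        { toFun := fun x => conj (B y x)
          map_add' := fun x₁ x₂ => by simp
          map_smul' := fun a x => by simp } with hφ₀def
      have hker : LinearMap.ker R ≤ LinearMap.ker φ₀ := by
        intro x hx
        rw [LinearMap.mem_ker] at hx ⊢
        have hbx := hbound y x
        rw [hx, norm_zero] at hbx
        have : ‖B y x‖ = 0 := by nlinarith [norm_nonneg (B y x)]
        have : B y x = 0 := norm_eq_zero.mp this
        simp [hφ₀def, this]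
      set ψ₀ : ↥(LinearMap.range R) →ₗ[ℂ] ℂ :=
        ((LinearMap.ker R).liftQ φ₀ hker).comp
          (R.quotKerEquivRange.symm : ↥(LinearMap.range R) →ₗ[ℂ] _) with hψ₀def
      have hψ₀ : ∀ x : X, ψ₀ ⟨R x, LinearMap.mem_range_self R x⟩ = conj (B y x) := by
        intro x
        rw [hψ₀def]
        simp only [LinearMap.coe_comp, Function.comp_apply, LinearEquiv.coe_coe]
        rw [LinearMap.quotKerEquivRange_symm_apply_image, Submodule.mkQ_apply,
          Submodule.liftQ_apply]
        rfl
      have hd : 0 ≤ d := hd0 y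
      have hψbdd : ∀ u : ↥(LinearMap.range R), ‖ψ₀ u‖ ≤ Real.sqrt d * ‖u‖ := by
        rintro ⟨u, hu⟩
        obtain ⟨x, rfl⟩ := hu
        rw [hψ₀ x, RCLike.norm_conj]
        have h1 : ‖B y x‖ ^ 2 ≤ (Real.sqrt d * ‖R x‖) ^ 2 := by
          rw [mul_pow, Real.sq_sqrt hd]
          exact hbound y x
        have h2 : ‖(⟨R x, LinearMap.mem_range_self R x⟩ : ↥(LinearMap.range R))‖ = ‖R x‖ := rfl
        rw [h2]
        nlinarith [norm_nonneg (B y x), mul_nonneg (Real.sqrt_nonneg d) (norm_nonneg (R x))]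
      set ψ : ↥(LinearMap.range R) →L[ℂ] ℂ := ψ₀.mkContinuous (Real.sqrt d) hψbdd with hψdef
      obtain ⟨g, hg, -⟩ := exists_extension_norm_eq (LinearMap.range R) ψ
      set t' : H := (InnerProductSpace.toDual ℂ H).symm g with ht'def
      have ht' : ∀ h : H, (inner ℂ t' h : ℂ) = g h := fun h => by
        rw [ht'def]
        exact InnerProductSpace.toDual_symm_apply
      refine ⟨(K.orthogonalProjection t' : H), (K.orthogonalProjection t').2, fun x => ?_⟩
      have h1 : (inner ℂ t' (R x) : ℂ) = conj (B y x) := by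
        rw [ht' (R x)]
        have := hg ⟨R x, LinearMap.mem_range_self R x⟩
        rw [show ((⟨R x, LinearMap.mem_range_self R x⟩ : ↥(LinearMap.range R)) : H) = R x from rfl] at this
        rw [this]
        show ψ₀ _ = _
        exact hψ₀ x
      have horth : t' - (K.orthogonalProjection t' : H) ∈ Kᗮ :=
        Submodule.sub_starProjection_mem_orthogonal (K := K) t'
      have h2 : (inner ℂ (R x) (t' - (K.orthogonalProjection t' : H)) : ℂ) = 0 := by
        rw [Submodule.mem_orthogonal] at horth
        exact horth (R x) (hRK x)
      have h3 : (inner ℂ (R x) (K.orthogonalProjection t' : H) : ℂ) = inner ℂ (R x) t' := by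
        rw [inner_sub_right] at h2
        linear_combination -h2
      rw [h3, ← inner_conj_symm, h1]
      simp
    -- uniqueness of representers
    have huniq : ∀ t₁ t₂ : H, t₁ ∈ K → t₂ ∈ K →
        (∀ x : X, (inner ℂ (R x) t₁ : ℂ) = inner ℂ (R x) t₂) → t₁ = t₂ := by
      intro t₁ t₂ h₁ h₂ he
      have hmem : t₁ - t₂ ∈ K := K.sub_mem h₁ h₂
      have hz : ∀ x : X, (inner ℂ (t₁ - t₂) (R x) : ℂ) = 0 := by
        intro x
        rw [← inner_conj_symm, inner_sub_right, he x]
        simp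
      have hcl : (t₁ - t₂) ∈ {h : H | (inner ℂ (t₁ - t₂) h : ℂ) = 0} := by
        have hclosed : IsClosed {h : H | (inner ℂ (t₁ - t₂) h : ℂ) = 0} :=
          isClosed_eq (continuous_const.inner continuous_id) continuous_const
        have hsub : Set.range R ⊆ {h : H | (inner ℂ (t₁ - t₂) h : ℂ) = 0} := by
          rintro _ ⟨x, rfl⟩
          exact hz x
        have : (K : Set H) ⊆ {h : H | (inner ℂ (t₁ - t₂) h : ℂ) = 0} := by
          rw [hKcoe]
          exact closure_minimal hsub hclosed
        exact this hmem
      have : t₁ - t₂ = 0 := inner_self_eq_zero.mp hcl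
      exact sub_eq_zero.mp this
    choose t htK htB using hex
    set T : Y →ₗ[ℂ] H :=
      { toFun := t
        map_add' := fun y₁ y₂ => by
          refine huniq _ _ (htK _) (K.add_mem (htK y₁) (htK y₂)) (fun x => ?_)
          rw [inner_add_right, htB y₁ x, htB y₂ x, htB (y₁ + y₂) x, map_add,
            LinearMap.add_apply]
        map_smul' := fun a y => by
          refine huniq _ _ (htK _) (K.smul_mem a (htK y)) (fun x => ?_)
          rw [RingHom.id_apply, inner_smul_right, htB y x, htB (a • y) x, map_smul,
            LinearMap.smul_apply]
          rfl } with hTdef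
    have hTy : ∀ y, T y = t y := fun y => rfl
    refine ⟨T, fun y => ?_, fun y => ?_, fun y => ?_⟩
    · ext x
      show (inner ℂ (R x) (T y) : ℂ) = B y x
      rw [hTy]
      exact htB y x
    · rw [← hKcoe, hTy]
      exact htK y
    · -- Schur complement nonnegative
      have hTle : ‖T y‖ ^ 2 ≤ (D y y).re := by
        set S : Set H := {h : H | 0 ≤ ‖h‖ ^ 2 + 2 * (inner ℂ h (T y) : ℂ).re + (D y y).re}
          with hSdef
        have hclosed : IsClosed S := by
          rw [hSdef]
          apply isClosed_le continuous_const
          apply Continuous.add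
          apply Continuous.add
          · exact (continuous_norm.pow 2)
          · exact continuous_const.mul
              (Complex.continuous_re.comp (continuous_id.inner continuous_const))
          · exact continuous_const
        have hsub : Set.range R ⊆ S := by
          rintro _ ⟨x, rfl⟩
          have := hq x y
          have hBx : (B y x).re = (inner ℂ (R x) (T y) : ℂ).re := by
            rw [hTy, htB y x]
          rw [hSdef]
          simp only [Set.mem_setOf_eq]
          rw [← hBx]
          exact this
        have hmem : -(T y) ∈ S := by
          have : ((-(T y) : H)) ∈ closure (Set.range R) := by
            rw [← hKcoe]
            exact K.neg_mem (by rw [hTy]; exact htK y)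
          exact closure_minimal hsub hclosed this
        rw [hSdef] at hmem
        simp only [Set.mem_setOf_eq, norm_neg, inner_neg_left] at hmem
        have hinner : (inner ℂ (T y) (T y) : ℂ).re = ‖T y‖ ^ 2 := by
          rw [inner_self_eq_norm_sq_to_K]
          norm_cast
        rw [Complex.neg_re, hinner] at hmem
        linarith
      have hDyy : D y y = (((D y y).re : ℝ) : ℂ) := Complex.ext (by simp) (by simp [him y])
      have heq : (D y - adjMap T (T y)) y = ((((D y y).re - ‖T y‖ ^ 2 : ℝ)) : ℂ) := by
        rw [LinearMap.sub_apply]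
        have hadj : (adjMap T (T y)) y = ((‖T y‖ ^ 2 : ℝ) : ℂ) := by
          show (inner ℂ (T y) (T y) : ℂ) = _
          rw [inner_self_eq_norm_sq_to_K, ← RCLike.ofReal_pow]
          norm_cast
        rw [hadj]
        conv_lhs => rw [hDyy]
        push_cast
        ring
      rw [heq, Complex.zero_le_real]
      linarith
  · rintro ⟨T, hT, -, hS⟩
    intro x y
    have hB : ∀ x, B y x = (inner ℂ (R x) (T y) : ℂ) := fun x => by
      rw [← hT y]; rfl
    have hsum : (A x + B y) x + ((Btilde B) x + D y) y
        = (inner ℂ (R x + T y) (R x + T y) : ℂ) + ((D y - adjMap T (T y)) y) := by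
      simp only [LinearMap.add_apply, LinearMap.sub_apply, hA, hB, Btilde, adjMap,
        LinearMap.coe_mk, AddHom.coe_mk, inner_add_add_self]
      rw [← inner_conj_symm (T y) (R x)]
      ring
    rw [hsum]
    have h1 : (0:ℂ) ≤ inner ℂ (R x + T y) (R x + T y) := by
      rw [inner_self_eq_norm_sq_to_K, ← RCLike.ofReal_pow, RCLike.ofReal_nonneg]
      positivity
    exact add_nonneg h1 (hS y)
end
end

section
/- If (A, B) is a positive pair, then for every y ∈ Y: sup over x ∈ X of |⟨By, x⟩|² / ⟨Ax, x⟩ = ⟨ω(A, B) y, y⟩ (with the convention 0/0 := 0). -/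
open scoped ComplexOrder ComplexConjugate
open Complex

noncomputable section

theorem schur_stmt17 {X Y H : Type} [AddCommGroup X] [Module ℂ X]
    [AddCommGroup Y] [Module ℂ Y]
    [NormedAddCommGroup H] [InnerProductSpace ℂ H] [CompleteSpace H]
    (A : X →ₗ[ℂ] (X →ₗ⋆[ℂ] ℂ)) (B : Y →ₗ[ℂ] (X →ₗ⋆[ℂ] ℂ))
    (R : X →ₗ[ℂ] H) (hR : ∀ x, A x = adjMap R (R x))
    (T : Y →ₗ[ℂ] H) (hT : ∀ y, adjMap R (T y) = B y)
    (hTran : ∀ y, T y ∈ closure (Set.range R)) :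
    ∀ y, IsLUB (Set.range fun x => ‖B y x‖ ^ 2 / (A x x).re)
      (((adjMap T (T y)) y).re) := by
  intro y
  have hB : ∀ x, B y x = @inner ℂ _ _ (R x) (T y) := fun x => by rw [← hT y]; rfl
  have hA : ∀ x, (A x x).re = ‖R x‖ ^ 2 := fun x => by
    rw [hR x]
    show (@inner ℂ _ _ (R x) (R x)).re = ‖R x‖ ^ 2
    simp [inner_self_eq_norm_sq_to_K]; norm_cast
  have hTy : ((adjMap T (T y)) y).re = ‖T y‖ ^ 2 := by
    show (@inner ℂ _ _ (T y) (T y)).re = ‖T y‖ ^ 2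
    simp [inner_self_eq_norm_sq_to_K]; norm_cast
  set φ : H → ℝ := fun h => ‖(@inner ℂ _ _ h (T y))‖ ^ 2 / ‖h‖ ^ 2 with hφ
  have hfun : (fun x => ‖B y x‖ ^ 2 / (A x x).re) = fun x => φ (R x) := by
    funext x; rw [hB x, hA x]
  rw [hfun, hTy]
  constructor
  · rintro _ ⟨x, rfl⟩
    by_cases h0 : R x = 0
    · simp [φ, h0]
    · rw [div_le_iff₀ (pow_pos (norm_pos_iff.mpr h0) 2)]
      calc ‖(@inner ℂ _ _ (R x) (T y))‖ ^ 2 ≤ (‖R x‖ * ‖T y‖) ^ 2 := by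
            gcongr; exact norm_inner_le_norm _ _
        _ = ‖T y‖ ^ 2 * ‖R x‖ ^ 2 := by ring
  · intro b hb
    by_cases hy : T y = 0
    · have : (0 : ℝ) ∈ Set.range fun x => φ (R x) := ⟨0, by simp [φ]⟩
      simpa [hy] using hb this
    · have hcont : ContinuousAt φ (T y) := by
        apply ContinuousAt.div
        · exact ((continuous_inner.comp (continuous_id.prodMk continuous_const)).norm.pow 2).continuousAt
        · exact (continuous_norm.pow 2).continuousAt
        · exact pow_ne_zero 2 (norm_ne_zero_iff.mpr hy)
      have hφT : φ (T y) = ‖T y‖ ^ 2 := by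
        have h1 : (@inner ℂ _ _ (T y) (T y)) = ((‖T y‖ : ℂ)) ^ 2 :=
          inner_self_eq_norm_sq_to_K _
        have hn : ‖T y‖ ≠ 0 := norm_ne_zero_iff.mpr hy
        rw [hφ]
        simp only [h1, norm_pow, norm_real, Real.norm_eq_abs, abs_norm]
        field_simp
      have hne : (nhdsWithin (T y) (Set.range R)).NeBot :=
        mem_closure_iff_nhdsWithin_neBot.mp (hTran y)
      have htend : Filter.Tendsto φ (nhdsWithin (T y) (Set.range R)) (nhds (φ (T y))) :=
        hcont.continuousWithinAt.tendsto
      have hev : ∀ᶠ h in nhdsWithin (T y) (Set.range R), φ h ≤ b := by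
        filter_upwards [eventually_mem_nhdsWithin] with h hh
        obtain ⟨x, rfl⟩ := hh
        exact hb ⟨x, rfl⟩
      have := le_of_tendsto htend hev
      rwa [hφT] at this
end
end
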